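/- arXiv:2304.07034 — 11 statements merged into one kernel-verified Lean document; each statement's English description precedes it below -/
import Mathlib

section
/- (Sufficiency, regular case of the optimality conditions.) Suppose L*, U* ⊆ H are disjoint with L* ∪ U* ⊊ H, and they satisfy L* = {h ∈ H : s(L*,U*) ≤ m_h/A_h} and U* = {h ∈ H : s(L*,U*) ≥ M_h/A_h}. Then the vector x^{(L*,U*)} is feasible for Problem 1 and minimizes f(x) = ∑_{h∈H} A_h²/x_h over all feasible vectors of Problem 1. -/
open Finset

/-- Feasibility for Problem 1. -/
def Feas1 {ι : Type*} (H : Finset ι) (m M : ι → ℝ) (n : ℝ) (x : ι → ℝ) : Prop :=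
  (∀ h ∈ H, 0 < x h) ∧ (∑ h ∈ H, x h = n) ∧ ∀ h ∈ H, m h ≤ x h ∧ x h ≤ M h

/-- The objective function of Problem 1. -/
noncomputable def obj {ι : Type*} (H : Finset ι) (A : ι → ℝ) (x : ι → ℝ) : ℝ :=
  ∑ h ∈ H, (A h) ^ 2 / x h

/-- The set function `s(L,U) = (n − ∑_{h∈L} m_h − ∑_{h∈U} M_h) / ∑_{h∈H\(L∪U)} A_h`. -/
noncomputable def sLU {ι : Type*} [DecidableEq ι] (H : Finset ι) (A m M : ι → ℝ) (n : ℝ)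
    (L U : Finset ι) : ℝ :=
  (n - ∑ h ∈ L, m h - ∑ h ∈ U, M h) / ∑ h ∈ H \ (L ∪ U), A h

/-- The allocation `x^{(L,U)}`: `m_h` on `L`, `M_h` on `U`, `A_h · s(L,U)` elsewhere. -/
noncomputable def xLU {ι : Type*} [DecidableEq ι] (H : Finset ι) (A m M : ι → ℝ) (n : ℝ)
    (L U : Finset ι) (h : ι) : ℝ :=
  if h ∈ L then m h else if h ∈ U then M h else A h * sLU H A m M n L U

/-- Convexity inequality for `t ↦ a²/t`. -/
lemma conv_ineq (a x y : ℝ) (hx : 0 < x) (hy : 0 < y) :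
    a ^ 2 / x ^ 2 * (x - y) ≤ a ^ 2 / y - a ^ 2 / x := by
  have h : a ^ 2 / y - a ^ 2 / x - a ^ 2 / x ^ 2 * (x - y)
      = a ^ 2 * (x - y) ^ 2 / (x ^ 2 * y) := by
    field_simp
  have h2 : 0 ≤ a ^ 2 * (x - y) ^ 2 / (x ^ 2 * y) := by positivity
  linarith

/-- Sufficiency, regular case of the optimality conditions: if disjoint `L*, U* ⊆ H` with
`L* ∪ U* ⊊ H` satisfy the fixed-point conditions, then `x^{(L*,U*)}` is feasible and optimal
for Problem 1. -/
theorem optimality_sufficiency_regular {ι : Type*} [DecidableEq ι] (H : Finset ι)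
    (hH : H.Nonempty) (A m M : ι → ℝ) (n : ℝ)
    (hA : ∀ h ∈ H, 0 < A h) (hm : ∀ h ∈ H, 0 < m h) (hmM : ∀ h ∈ H, m h < M h)
    (hn₁ : ∑ h ∈ H, m h ≤ n) (hn₂ : n ≤ ∑ h ∈ H, M h)
    (L U : Finset ι) (hLH : L ⊆ H) (hUH : U ⊆ H) (hdisj : Disjoint L U)
    (hproper : L ∪ U ⊂ H)
    (hLfix : ∀ h, h ∈ L ↔ h ∈ H ∧ sLU H A m M n L U ≤ m h / A h)
    (hUfix : ∀ h, h ∈ U ↔ h ∈ H ∧ M h / A h ≤ sLU H A m M n L U) :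
    Feas1 H m M n (xLU H A m M n L U) ∧
      ∀ y, Feas1 H m M n y → obj H A (xLU H A m M n L U) ≤ obj H A y := by
  set s : ℝ := sLU H A m M n L U with hs
  set x : ι → ℝ := xLU H A m M n L U with hxdef
  -- the "interior" stratum set is nonempty
  have hTne : (H \ (L ∪ U)).Nonempty := by
    obtain ⟨h, hhH, hhLU⟩ := exists_of_ssubset hproper
    exact ⟨h, mem_sdiff.mpr ⟨hhH, hhLU⟩⟩
  have hsumA : 0 < ∑ h ∈ H \ (L ∪ U), A h :=
    Finset.sum_pos (fun i hi => hA i (mem_sdiff.mp hi).1) hTne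
  -- strict bounds on interior strata
  have hTbounds : ∀ h ∈ H \ (L ∪ U), m h / A h < s ∧ s < M h / A h := by
    intro h hh
    obtain ⟨hH', hLU⟩ := mem_sdiff.mp hh
    rw [mem_union] at hLU
    push_neg at hLU
    constructor
    · by_contra hcon
      exact hLU.1 ((hLfix h).mpr ⟨hH', le_of_not_gt hcon⟩)
    · by_contra hcon
      exact hLU.2 ((hUfix h).mpr ⟨hH', le_of_not_gt hcon⟩)
  have hs_pos : 0 < s := by
    obtain ⟨h0, hh0⟩ := hTne
    have h0H := (mem_sdiff.mp hh0).1
    have : 0 < m h0 / A h0 := div_pos (hm h0 h0H) (hA h0 h0H)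
    linarith [(hTbounds h0 hh0).1]
  have hsval : (∑ h ∈ H \ (L ∪ U), A h) * s = n - ∑ h ∈ L, m h - ∑ h ∈ U, M h := by
    rw [hs]
    unfold sLU
    exact mul_div_cancel₀ _ (ne_of_gt hsumA)
  -- values of x
  have hxL : ∀ h ∈ L, x h = m h := fun h hh => if_pos hh
  have hxU : ∀ h ∈ U, x h = M h := by
    intro h hh
    have : h ∉ L := fun hc => (Finset.disjoint_left.mp hdisj hc) hh
    simp only [hxdef, xLU, if_neg this, if_pos hh]
  have hxT : ∀ h ∈ H \ (L ∪ U), x h = A h * s := by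
    intro h hh
    have hLU := (mem_sdiff.mp hh).2
    rw [mem_union] at hLU
    push_neg at hLU
    simp only [hxdef, xLU, if_neg hLU.1, if_neg hLU.2, hs]
  -- feasibility bounds (also used for positivity)
  have hbounds : ∀ h ∈ H, m h ≤ x h ∧ x h ≤ M h := by
    intro h hhH
    by_cases hL : h ∈ L
    · rw [hxL h hL]; exact ⟨le_refl _, le_of_lt (hmM h hhH)⟩
    · by_cases hU : h ∈ U
      · rw [hxU h hU]; exact ⟨le_of_lt (hmM h hhH), le_refl _⟩
      · have hT : h ∈ H \ (L ∪ U) := mem_sdiff.mpr ⟨hhH, by simp [hL, hU]⟩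
        rw [hxT h hT]
        obtain ⟨hb1, hb2⟩ := hTbounds h hT
        have hApos := hA h hhH
        constructor
        · have := (div_lt_iff₀ hApos).mp hb1
          linarith
        · have := (lt_div_iff₀ hApos).mp hb2
          linarith
  have hxpos : ∀ h ∈ H, 0 < x h := fun h hh => lt_of_lt_of_le (hm h hh) (hbounds h hh).1
  -- the sum constraint
  have hsum : ∑ h ∈ H, x h = n := by
    have hsub : L ∪ U ⊆ H := union_subset hLH hUH
    have hsplit : ∑ h ∈ H \ (L ∪ U), x h + ∑ h ∈ L ∪ U, x h = ∑ h ∈ H, x h :=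
      Finset.sum_sdiff hsub
    have hLUsum : ∑ h ∈ L ∪ U, x h = ∑ h ∈ L, m h + ∑ h ∈ U, M h := by
      rw [Finset.sum_union hdisj]
      rw [Finset.sum_congr rfl hxL, Finset.sum_congr rfl hxU]
    have hTsum : ∑ h ∈ H \ (L ∪ U), x h = n - ∑ h ∈ L, m h - ∑ h ∈ U, M h := by
      rw [Finset.sum_congr rfl hxT, ← Finset.sum_mul, hsval]
    linarith
  refine ⟨⟨hxpos, hsum, hbounds⟩, ?_⟩
  -- optimality
  intro y hy
  obtain ⟨hy0, hysum, hyb⟩ := hy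
  have key : ∀ h ∈ H, 1 / s ^ 2 * (x h - y h) ≤ A h ^ 2 / y h - A h ^ 2 / x h := by
    intro h hhH
    have hApos := hA h hhH
    have hypos := hy0 h hhH
    by_cases hL : h ∈ L
    · -- lower-bound stratum
      have hsm : s ≤ m h / A h := ((hLfix h).mp hL).2
      have hmy : m h ≤ y h := (hyb h hhH).1
      have hmpos := hm h hhH
      rw [hxL h hL]
      have hAs : s * A h ≤ m h := (le_div_iff₀ hApos).mp hsm
      have step1 : A h ^ 2 / m h ^ 2 ≤ 1 / s ^ 2 := by
        rw [div_le_div_iff₀ (by positivity) (by positivity)]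
        nlinarith [mul_self_le_mul_self (by positivity : (0:ℝ) ≤ s * A h) hAs]
      have step2 : 1 / s ^ 2 * (m h - y h) ≤ A h ^ 2 / m h ^ 2 * (m h - y h) :=
        mul_le_mul_of_nonpos_right step1 (by linarith)
      have step3 := conv_ineq (A h) (m h) (y h) hmpos hypos
      linarith
    · by_cases hU : h ∈ U
      · -- upper-bound stratum
        have hsM : M h / A h ≤ s := ((hUfix h).mp hU).2
        have hMy : y h ≤ M h := (hyb h hhH).2
        have hMpos : 0 < M h := lt_trans (hm h hhH) (hmM h hhH)
        rw [hxU h hU]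
        have hAs : M h ≤ s * A h := (div_le_iff₀ hApos).mp hsM
        have step1 : 1 / s ^ 2 ≤ A h ^ 2 / M h ^ 2 := by
          rw [div_le_div_iff₀ (by positivity) (by positivity)]
          nlinarith [mul_self_le_mul_self (le_of_lt hMpos) hAs]
        have step2 : 1 / s ^ 2 * (M h - y h) ≤ A h ^ 2 / M h ^ 2 * (M h - y h) :=
          mul_le_mul_of_nonneg_right step1 (by linarith)
        have step3 := conv_ineq (A h) (M h) (y h) hMpos hypos
        linarith
      · -- interior stratum
        have hT : h ∈ H \ (L ∪ U) := mem_sdiff.mpr ⟨hhH, by simp [hL, hU]⟩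
        rw [hxT h hT]
        have hAspos : 0 < A h * s := mul_pos hApos hs_pos
        have heq : A h ^ 2 / (A h * s) ^ 2 = 1 / s ^ 2 := by
          field_simp
        have := conv_ineq (A h) (A h * s) (y h) hAspos hypos
        rw [heq] at this
        exact this
  have hsumle := Finset.sum_le_sum key
  have hLHS : ∑ h ∈ H, 1 / s ^ 2 * (x h - y h) = 0 := by
    rw [← Finset.mul_sum, Finset.sum_sub_distrib, hsum, hysum]
    ring
  have hRHS : ∑ h ∈ H, (A h ^ 2 / y h - A h ^ 2 / x h) = obj H A y - obj H A x := by
    rw [Finset.sum_sub_distrib]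
    rfl
  rw [hLHS, hRHS] at hsumle
  linarith
end

section
/- (Sufficiency, vertex case of the optimality conditions.) Suppose L*, U* ⊆ H are disjoint with L* ∪ U* = H, such that ∑_{h∈L*} m_h + ∑_{h∈U*} M_h = n, and, in case both L* and U* are nonempty, max_{h∈U*} M_h/A_h ≤ min_{h∈L*} m_h/A_h. Then the vector x* defined by x*_h = m_h for h ∈ L* and x*_h = M_h for h ∈ U* is feasible for Problem 1 and minimizes f(x) = ∑_{h∈H} A_h²/x_h over all feasible vectors of Problem 1. -/
open Finset

/-- Sufficiency, vertex case of the optimality conditions: if disjoint `L*, U*` cover `H`,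
`∑_{L*} m + ∑_{U*} M = n`, and (when both are nonempty) `max_{U*} M_h/A_h ≤ min_{L*} m_h/A_h`,
then the vertex allocation (`m` on `L*`, `M` on `U*`) is feasible and optimal for Problem 1. -/
theorem optimality_sufficiency_vertex {ι : Type*} [DecidableEq ι] (H : Finset ι)
    (hH : H.Nonempty) (A m M : ι → ℝ) (n : ℝ)
    (hA : ∀ h ∈ H, 0 < A h) (hm : ∀ h ∈ H, 0 < m h) (hmM : ∀ h ∈ H, m h < M h)
    (hn₁ : ∑ h ∈ H, m h ≤ n) (hn₂ : n ≤ ∑ h ∈ H, M h)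
    (L U : Finset ι) (hdisj : Disjoint L U) (hcover : L ∪ U = H)
    (hsum : ∑ h ∈ L, m h + ∑ h ∈ U, M h = n)
    (hmaxmin : ∀ hu ∈ U, ∀ hl ∈ L, M hu / A hu ≤ m hl / A hl) :
    Feas1 H m M n (fun h => if h ∈ L then m h else M h) ∧
      ∀ y, Feas1 H m M n y →
        obj H A (fun h => if h ∈ L then m h else M h) ≤ obj H A y := by
  have hLH : ∀ l ∈ L, l ∈ H := fun l hl => hcover ▸ mem_union_left U hl
  have hUH : ∀ u ∈ U, u ∈ H := fun u hu => hcover ▸ mem_union_right L hu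
  have hUnotL : ∀ u ∈ U, u ∉ L := fun u hu hul => disjoint_left.mp hdisj hul hu
  set x : ι → ℝ := fun h => if h ∈ L then m h else M h with hxdef
  have hxL : ∀ l ∈ L, x l = m l := fun l hl => if_pos hl
  have hxU : ∀ u ∈ U, x u = M u := fun u hu => if_neg (hUnotL u hu)
  have hMpos : ∀ h ∈ H, 0 < M h := fun h hh => (hm h hh).trans (hmM h hh)
  have hmemU : ∀ h ∈ H, h ∉ L → h ∈ U := by
    intro h hh hl
    have : h ∈ L ∪ U := by rw [hcover]; exact hh
    rcases mem_union.mp this with h' | h'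
    · exact absurd h' hl
    · exact h'
  have hxpos : ∀ h ∈ H, 0 < x h := by
    intro h hh
    by_cases hl : h ∈ L
    · rw [hxL h hl]; exact hm h hh
    · have : x h = M h := if_neg hl
      rw [this]; exact hMpos h hh
  have hxsum : ∑ h ∈ H, x h = n := by
    rw [← hcover, sum_union hdisj, sum_congr rfl hxL, sum_congr rfl hxU]
    exact hsum
  have hfeas : Feas1 H m M n x := by
    refine ⟨hxpos, hxsum, fun h hh => ?_⟩
    by_cases hl : h ∈ L
    · rw [hxL h hl]; exact ⟨le_refl _, (hmM h hh).le⟩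
    · have hxh : x h = M h := if_neg hl
      rw [hxh]; exact ⟨(hmM h hh).le, le_refl _⟩
  refine ⟨hfeas, ?_⟩
  intro y hy
  obtain ⟨hypos, hysum, hybnd⟩ := hy
  have cross : ∀ l ∈ L, ∀ u ∈ U, A l ^ 2 / m l ^ 2 ≤ A u ^ 2 / M u ^ 2 := by
    intro l hl u hu
    have h1 := hmaxmin u hu l hl
    have hAl := hA l (hLH l hl); have hAu := hA u (hUH u hu)
    have hml := hm l (hLH l hl); have hMu := hMpos u (hUH u hu)
    rw [div_le_div_iff₀ hAu hAl] at h1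
    rw [div_le_div_iff₀ (by positivity) (by positivity)]
    nlinarith [mul_le_mul h1 h1 (by positivity : (0:ℝ) ≤ M u * A l) (by positivity : (0:ℝ) ≤ m l * A u)]
  obtain ⟨lam, hlamL, hlamU⟩ :
      ∃ lam : ℝ, (∀ l ∈ L, A l ^ 2 / m l ^ 2 ≤ lam) ∧ (∀ u ∈ U, lam ≤ A u ^ 2 / M u ^ 2) := by
    by_cases hLne : L.Nonempty
    · exact ⟨L.sup' hLne (fun h => A h ^ 2 / m h ^ 2),
        fun l hl => Finset.le_sup' (fun h => A h ^ 2 / m h ^ 2) hl,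
        fun u hu => sup'_le _ _ (fun l hl => cross l hl u hu)⟩
    · refine ⟨0, fun l hl => absurd ⟨l, hl⟩ hLne, fun u hu => ?_⟩
      positivity
  have hkey : ∀ h ∈ H, 0 ≤ (A h ^ 2 / x h ^ 2 - lam) * (x h - y h) := by
    intro h hh
    by_cases hl : h ∈ L
    · have hx' : x h = m h := hxL h hl
      rw [hx']
      have h1 : A h ^ 2 / m h ^ 2 - lam ≤ 0 := by linarith [hlamL h hl]
      have h2 : m h - y h ≤ 0 := by linarith [(hybnd h hh).1]
      nlinarith
    · have hu : h ∈ U := hmemU h hh hl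
      have hx' : x h = M h := if_neg hl
      apply mul_nonneg
      · rw [hx']; linarith [hlamU h hu]
      · rw [hx']; linarith [(hybnd h hh).2]
  have hconv : ∀ h ∈ H, A h ^ 2 / x h ^ 2 * (x h - y h) ≤ A h ^ 2 / y h - A h ^ 2 / x h := by
    intro h hh
    have hxp := hxpos h hh; have hyp := hypos h hh
    have heq : A h ^ 2 / y h - A h ^ 2 / x h - A h ^ 2 / x h ^ 2 * (x h - y h)
        = A h ^ 2 * (x h - y h) ^ 2 / (x h ^ 2 * y h) := by
      field_simp
    have hnn : 0 ≤ A h ^ 2 * (x h - y h) ^ 2 / (x h ^ 2 * y h) := by positivity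
    linarith
  have hdiff0 : ∑ h ∈ H, (x h - y h) = 0 := by
    rw [Finset.sum_sub_distrib, hxsum, hysum]; ring
  have hstep1 : 0 ≤ ∑ h ∈ H, (A h ^ 2 / x h ^ 2 - lam) * (x h - y h) := sum_nonneg hkey
  have hstep2 : ∑ h ∈ H, (A h ^ 2 / x h ^ 2 - lam) * (x h - y h)
      = ∑ h ∈ H, A h ^ 2 / x h ^ 2 * (x h - y h) - lam * ∑ h ∈ H, (x h - y h) := by
    rw [mul_sum, ← Finset.sum_sub_distrib]
    exact sum_congr rfl fun h _ => by ring
  have hstep3 : ∑ h ∈ H, A h ^ 2 / x h ^ 2 * (x h - y h)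
      ≤ ∑ h ∈ H, (A h ^ 2 / y h - A h ^ 2 / x h) := sum_le_sum hconv
  have hstep4 : ∑ h ∈ H, (A h ^ 2 / y h - A h ^ 2 / x h) = obj H A y - obj H A x := by
    rw [Finset.sum_sub_distrib]; rfl
  rw [hstep2, hdiff0] at hstep1
  have : obj H A x ≤ obj H A y := by
    rw [← sub_nonneg, ← hstep4]
    linarith
  exact this
end

section
/- (Necessity of the optimality conditions.) If x* minimizes f(x) = ∑_{h∈H} A_h²/x_h over all feasible vectors of Problem 1, then there exist disjoint sets L*, U* ⊆ H such that x* = x^{(L*,U*)} and one of the following holds: (CASE I) L* ∪ U* ⊊ H, L* = {h ∈ H : s(L*,U*) ≤ m_h/A_h} and U* = {h ∈ H : s(L*,U*) ≥ M_h/A_h}; or (CASE II) L* ∪ U* = H, ∑_{h∈L*} m_h + ∑_{h∈U*} M_h = n, and, if both L* and U* are nonempty, max_{h∈U*} M_h/A_h ≤ min_{h∈L*} m_h/A_h. -/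
open Finset

lemma exchange {ι : Type*} [DecidableEq ι] (H : Finset ι) (A m M : ι → ℝ) (n : ℝ)
    (hA : ∀ h ∈ H, 0 < A h) (hm : ∀ h ∈ H, 0 < m h)
    (x : ι → ℝ) (hfeas : Feas1 H m M n x)
    (hopt : ∀ y, Feas1 H m M n y → obj H A x ≤ obj H A y)
    {g h : ι} (hg : g ∈ H) (hh : h ∈ H) (hgh : g ≠ h)
    (h1 : x g < M g) (h2 : m h < x h) : x h / A h ≤ x g / A g := by
  by_contra hcon
  push_neg at hcon
  obtain ⟨hpos, hsum, hbd⟩ := hfeas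
  have hAg := hA g hg; have hAh := hA h hh
  have hxg := hpos g hg; have hxh := hpos h hh
  have hmh := hm h hh
  have key : A h * x g < A g * x h := by
    rw [div_lt_div_iff₀ hAg hAh] at hcon; linarith
  have hden : (0:ℝ) < (A g)^2*(x h) + (A h)^2*(x g) := by positivity
  have hnum : (0:ℝ) < (A g)^2*(x h)^2 - (A h)^2*(x g)^2 := by
    have h6 : 0 < (A g * x h - A h * x g) * (A g * x h + A h * x g) :=
      mul_pos (by linarith) (by positivity)
    nlinarith [h6]
  set D : ℝ := ((A g)^2*(x h)^2 - (A h)^2*(x g)^2)/((A g)^2*(x h) + (A h)^2*(x g)) with hD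
  have hDpos : 0 < D := div_pos hnum hden
  have hmin : (0:ℝ) < min D (min (M g - x g) (x h - m h)) :=
    lt_min hDpos (lt_min (by linarith) (by linarith))
  set ε : ℝ := min D (min (M g - x g) (x h - m h)) / 2 with hεdef
  have hε : 0 < ε := by positivity
  have hεD : ε < D := by
    have := min_le_left D (min (M g - x g) (x h - m h))
    rw [hεdef]; linarith
  have hε1 : ε < M g - x g := by
    have h3 := min_le_right D (min (M g - x g) (x h - m h))
    have h4 := min_le_left (M g - x g) (x h - m h)
    rw [hεdef]; linarith
  have hε2 : ε < x h - m h := by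
    have h3 := min_le_right D (min (M g - x g) (x h - m h))
    have h4 := min_le_right (M g - x g) (x h - m h)
    rw [hεdef]; linarith
  have hεD' : ε * ((A g)^2*(x h) + (A h)^2*(x g)) < (A g)^2*(x h)^2 - (A h)^2*(x g)^2 := by
    rw [hD, lt_div_iff₀ hden] at hεD; linarith
  set y : ι → ℝ := fun k => if k = g then x g + ε else if k = h then x h - ε else x k with hy
  have hyg : y g = x g + ε := by simp [hy]
  have hyh : y h = x h - ε := by simp [hy, Ne.symm hgh]
  have hyo : ∀ k, k ≠ g → k ≠ h → y k = x k := by intro k k1 k2; simp [hy, k1, k2]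
  clear_value D ε y
  clear hD hεdef hy hεD hmin hDpos
  have hsub : ({g, h} : Finset ι) ⊆ H := by
    intro k hk; simp at hk; rcases hk with rfl | rfl <;> assumption
  have hsumy : ∑ k ∈ H, y k = ∑ k ∈ H, x k := by
    have h7 : ∑ k ∈ ({g, h} : Finset ι), (y k - x k) = ∑ k ∈ H, (y k - x k) :=
      Finset.sum_subset hsub (by
        intro k hk1 hk2
        simp only [Finset.mem_insert, Finset.mem_singleton] at hk2
        push_neg at hk2
        rw [hyo k hk2.1 hk2.2]; ring)
    rw [Finset.sum_pair hgh, hyg, hyh] at h7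
    rw [Finset.sum_sub_distrib] at h7
    linarith
  have hyfeas : Feas1 H m M n y := by
    refine ⟨?_, ?_, ?_⟩
    · intro k hk
      by_cases k1 : k = g
      · subst k1; rw [hyg]; linarith
      by_cases k2 : k = h
      · subst k2; rw [hyh]; linarith
      · rw [hyo k k1 k2]; exact hpos k hk
    · rw [hsumy, hsum]
    · intro k hk
      by_cases k1 : k = g
      · rw [k1, hyg]
        exact ⟨by linarith [(hbd g hg).1], by linarith⟩
      by_cases k2 : k = h
      · rw [k2, hyh]
        exact ⟨by linarith, by linarith [(hbd h hh).2]⟩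
      · rw [hyo k k1 k2]; exact hbd k hk
  have hobj := hopt y hyfeas
  have hkey2 : (A h)^2 * (x g * (x g + ε)) < (A g)^2 * (x h * (x h - ε)) := by nlinarith
  have hd2 : ∑ k ∈ H, (A k)^2 / y k - ∑ k ∈ H, (A k)^2 / x k
      = ((A g)^2 / (x g + ε) - (A g)^2 / x g) + ((A h)^2 / (x h - ε) - (A h)^2 / x h) := by
    have h7 : ∑ k ∈ ({g, h} : Finset ι), ((A k)^2 / y k - (A k)^2 / x k)
        = ∑ k ∈ H, ((A k)^2 / y k - (A k)^2 / x k) :=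
      Finset.sum_subset hsub (by
        intro k hk1 hk2
        simp only [Finset.mem_insert, Finset.mem_singleton] at hk2
        push_neg at hk2
        rw [hyo k hk2.1 hk2.2]; ring)
    rw [Finset.sum_pair hgh, hyg, hyh] at h7
    rw [Finset.sum_sub_distrib] at h7
    linarith
  have hp1 : (0:ℝ) < x g * (x g + ε) := by positivity
  have hp2 : (0:ℝ) < x h * (x h - ε) := by nlinarith
  have e1 : (A g)^2 / (x g + ε) - (A g)^2 / x g = -((A g)^2 * ε / (x g * (x g + ε))) := by
    rw [div_sub_div _ _ (by linarith : x g + ε ≠ 0) (by linarith : x g ≠ 0), neg_div']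
    congr 1 <;> ring
  have e2 : (A h)^2 / (x h - ε) - (A h)^2 / x h = (A h)^2 * ε / (x h * (x h - ε)) := by
    rw [div_sub_div _ _ (by linarith : x h - ε ≠ 0) (by linarith : x h ≠ 0)]
    congr 1 <;> ring
  have hfrac : (A h)^2 * ε / (x h * (x h - ε)) < (A g)^2 * ε / (x g * (x g + ε)) := by
    rw [div_lt_div_iff₀ hp2 hp1]
    have h8 := mul_lt_mul_of_pos_left hkey2 hε
    ring_nf at h8 ⊢
    linarith
  rw [e1, e2] at hd2
  have hlt : obj H A y < obj H A x := by
    unfold obj; linarith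
  linarith

/-- Necessity of the optimality conditions: any optimal solution `x*` of Problem 1 equals
`x^{(L*,U*)}` on `H` for some disjoint `L*, U* ⊆ H` satisfying CASE I (regular) or
CASE II (vertex). -/
theorem optimality_necessity {ι : Type*} [DecidableEq ι] (H : Finset ι)
    (hH : H.Nonempty) (A m M : ι → ℝ) (n : ℝ)
    (hA : ∀ h ∈ H, 0 < A h) (hm : ∀ h ∈ H, 0 < m h) (hmM : ∀ h ∈ H, m h < M h)
    (hn₁ : ∑ h ∈ H, m h ≤ n) (hn₂ : n ≤ ∑ h ∈ H, M h)
    (x : ι → ℝ) (hfeas : Feas1 H m M n x)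
    (hopt : ∀ y, Feas1 H m M n y → obj H A x ≤ obj H A y) :
    ∃ L U : Finset ι, L ⊆ H ∧ U ⊆ H ∧ Disjoint L U ∧
      (∀ h ∈ H, x h = xLU H A m M n L U h) ∧
      ((L ∪ U ⊂ H ∧
          (∀ h, h ∈ L ↔ h ∈ H ∧ sLU H A m M n L U ≤ m h / A h) ∧
          (∀ h, h ∈ U ↔ h ∈ H ∧ M h / A h ≤ sLU H A m M n L U)) ∨
        (L ∪ U = H ∧
          (∑ h ∈ L, m h + ∑ h ∈ U, M h = n) ∧
          (∀ hu ∈ U, ∀ hl ∈ L, M hu / A hu ≤ m hl / A hl))) := by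
  classical
  obtain ⟨hpos, hsum, hbd⟩ := id hfeas
  set L : Finset ι := H.filter (fun h => x h = m h) with hLdef
  have hLs : L ⊆ H := Finset.filter_subset _ _
  have hLm : ∀ h ∈ L, x h = m h := by
    intro h hh; exact (Finset.mem_filter.mp hh).2
  by_cases hF : ∃ h0 ∈ H, m h0 < x h0 ∧ x h0 < M h0
  · -- CASE I
    obtain ⟨h0, hh0H, hm0, hM0⟩ := hF
    set U : Finset ι := H.filter (fun h => x h = M h) with hUdef
    have hUs : U ⊆ H := Finset.filter_subset _ _
    have hUM : ∀ h ∈ U, x h = M h := by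
      intro h hh; exact (Finset.mem_filter.mp hh).2
    have hdisj : Disjoint L U := by
      rw [Finset.disjoint_left]
      intro a haL haU
      have h1 := hLm a haL
      have h2 := hUM a haU
      have := hmM a (hLs haL)
      linarith
    set s0 : ℝ := x h0 / A h0 with hs0
    -- every strictly interior point has ratio s0
    have hmid : ∀ h ∈ H, m h < x h → x h < M h → x h / A h = s0 := by
      intro h hhH hm' hM'
      by_cases he : h = h0
      · rw [he]
      · exact le_antisymm
          (exchange H A m M n hA hm x hfeas hopt hh0H hhH (fun e => he e.symm) hM0 hm')
          (exchange H A m M n hA hm x hfeas hopt hhH hh0H he hM' hm0)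
    -- membership in the complement
    have hC : ∀ h, h ∈ H \ (L ∪ U) ↔ h ∈ H ∧ m h < x h ∧ x h < M h := by
      intro h
      rw [Finset.mem_sdiff, Finset.mem_union]
      constructor
      · rintro ⟨hhH, hnot⟩
        push_neg at hnot
        have h1 : x h ≠ m h := by
          intro e; exact hnot.1 (Finset.mem_filter.mpr ⟨hhH, e⟩)
        have h2 : x h ≠ M h := by
          intro e; exact hnot.2 (Finset.mem_filter.mpr ⟨hhH, e⟩)
        exact ⟨hhH, lt_of_le_of_ne (hbd h hhH).1 (Ne.symm h1), lt_of_le_of_ne (hbd h hhH).2 h2⟩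
      · rintro ⟨hhH, h1, h2⟩
        refine ⟨hhH, ?_⟩
        rintro (hc | hc)
        · have := hLm h hc; linarith
        · have := hUM h hc; linarith
    have hh0C : h0 ∈ H \ (L ∪ U) := (hC h0).mpr ⟨hh0H, hm0, hM0⟩
    have hCx : ∀ h ∈ H \ (L ∪ U), x h = A h * s0 := by
      intro h hh
      obtain ⟨hhH, h1, h2⟩ := (hC h).mp hh
      have := hmid h hhH h1 h2
      have hAh := hA h hhH
      field_simp at this
      linarith [this]
    have hApos : (0:ℝ) < ∑ h ∈ H \ (L ∪ U), A h :=
      Finset.sum_pos (fun h hh => hA h (Finset.mem_sdiff.mp hh).1) ⟨h0, hh0C⟩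
    -- value of s
    have hLx : ∑ h ∈ L, x h = ∑ h ∈ L, m h := Finset.sum_congr rfl hLm
    have hUx : ∑ h ∈ U, x h = ∑ h ∈ U, M h := Finset.sum_congr rfl hUM
    have hnum : n - ∑ h ∈ L, m h - ∑ h ∈ U, M h = ∑ h ∈ H \ (L ∪ U), x h := by
      have h1 : ∑ h ∈ H \ (L ∪ U), x h + ∑ h ∈ (L ∪ U), x h = ∑ h ∈ H, x h :=
        Finset.sum_sdiff (Finset.union_subset hLs hUs)
      rw [Finset.sum_union hdisj, hLx, hUx, hsum] at h1
      linarith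
    have hsval : sLU H A m M n L U = s0 := by
      have hCx' : ∑ h ∈ H \ (L ∪ U), x h = (∑ h ∈ H \ (L ∪ U), A h) * s0 := by
        rw [Finset.sum_congr rfl hCx, ← Finset.sum_mul]
      unfold sLU
      rw [hnum, hCx', mul_comm, mul_div_assoc, div_self (ne_of_gt hApos), mul_one]
    have hh0nLU : h0 ∉ L ∪ U := (Finset.mem_sdiff.mp hh0C).2
    refine ⟨L, U, hLs, hUs, hdisj, ?_, Or.inl ⟨?_, ?_, ?_⟩⟩
    · intro h hhH
      unfold xLU
      by_cases hL : h ∈ L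
      · rw [if_pos hL]; exact hLm h hL
      by_cases hU : h ∈ U
      · rw [if_neg hL, if_pos hU]; exact hUM h hU
      · rw [if_neg hL, if_neg hU, hsval]
        exact hCx h (Finset.mem_sdiff.mpr ⟨hhH, fun hc => by
          rcases Finset.mem_union.mp hc with h' | h'
          · exact hL h'
          · exact hU h'⟩)
    · exact Finset.ssubset_iff_of_subset (Finset.union_subset hLs hUs) |>.mpr
        ⟨h0, hh0H, hh0nLU⟩
    · -- L characterization
      intro h
      rw [hsval]
      constructor
      · intro hhL
        have hhH := hLs hhL
        have hAh := hA h hhH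
        have hxm := hLm h hhL
        refine ⟨hhH, ?_⟩
        have hne : h ≠ h0 := by
          intro e; rw [e] at hxm; linarith
        have hle := exchange H A m M n hA hm x hfeas hopt hhH hh0H hne
          (by rw [hxm]; exact hmM h hhH) hm0
        rw [hxm] at hle
        exact hle
      · rintro ⟨hhH, hcond⟩
        have hAh := hA h hhH
        by_contra hcL
        have hm1 : m h < x h := by
          have := (hbd h hhH).1
          rcases lt_or_eq_of_le this with h' | h'
          · exact h'
          · exact absurd (Finset.mem_filter.mpr ⟨hhH, h'.symm⟩) hcL
        by_cases hM1 : x h < M h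
        · have := hmid h hhH hm1 hM1
          rw [← this] at hcond
          have : x h ≤ m h := by
            rw [div_le_div_iff₀ hAh hAh] at hcond
            nlinarith
          linarith
        · have hxM : x h = M h := le_antisymm (hbd h hhH).2 (le_of_not_gt hM1)
          have hne : h0 ≠ h := by
            intro e; rw [← e] at hxM; linarith
          have hle := exchange H A m M n hA hm x hfeas hopt hh0H hhH hne hM0 hm1
          rw [hxM] at hle
          have h9 : M h ≤ m h := by
            have h10 : M h / A h ≤ m h / A h := le_trans hle hcond
            rw [div_le_div_iff₀ hAh hAh] at h10
            nlinarith
          linarith [hmM h hhH]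
    · -- U characterization
      intro h
      rw [hsval]
      constructor
      · intro hhU
        have hhH := hUs hhU
        have hAh := hA h hhH
        have hxM := hUM h hhU
        refine ⟨hhH, ?_⟩
        have hne : h0 ≠ h := by
          intro e; rw [← e] at hxM; linarith
        have hle := exchange H A m M n hA hm x hfeas hopt hh0H hhH hne hM0
          (by rw [hxM]; exact hmM h hhH)
        rw [hxM] at hle
        exact hle
      · rintro ⟨hhH, hcond⟩
        have hAh := hA h hhH
        by_contra hcU
        have hM1 : x h < M h := by
          have := (hbd h hhH).2
          rcases lt_or_eq_of_le this with h' | h'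
          · exact h'
          · exact absurd (Finset.mem_filter.mpr ⟨hhH, h'⟩) hcU
        by_cases hm1 : m h < x h
        · have := hmid h hhH hm1 hM1
          have h9 : M h ≤ x h := by
            rw [← this] at hcond
            rw [div_le_div_iff₀ hAh hAh] at hcond
            nlinarith
          linarith
        · have hxm : x h = m h := le_antisymm (le_of_not_gt hm1) (hbd h hhH).1
          have hne : h ≠ h0 := by
            intro e; rw [e] at hxm; linarith
          have hle := exchange H A m M n hA hm x hfeas hopt hhH hh0H hne
            (by rw [hxm]; exact hmM h hhH) hm0
          rw [hxm] at hle
          have h10 : M h / A h ≤ m h / A h := le_trans hcond hle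
          rw [div_le_div_iff₀ hAh hAh] at h10
          have : M h ≤ m h := by nlinarith
          linarith [hmM h hhH]
  · -- CASE II
    push_neg at hF
    set U : Finset ι := H.filter (fun h => x h ≠ m h) with hUdef
    have hUs : U ⊆ H := Finset.filter_subset _ _
    have hUM : ∀ h ∈ U, x h = M h := by
      intro h hh
      obtain ⟨hhH, hne⟩ := Finset.mem_filter.mp hh
      have h1 : m h < x h := lt_of_le_of_ne (hbd h hhH).1 (Ne.symm hne)
      have h2 := hF h hhH h1
      exact le_antisymm (hbd h hhH).2 h2
    have hdisj : Disjoint L U := by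
      rw [Finset.disjoint_left]
      intro a haL haU
      exact (Finset.mem_filter.mp haU).2 (hLm a haL)
    have hLU : L ∪ U = H := Finset.filter_union_filter_not_eq _ H
    have hsum2 : ∑ h ∈ L, m h + ∑ h ∈ U, M h = n := by
      rw [← Finset.sum_congr rfl hLm, ← Finset.sum_congr rfl hUM,
        ← Finset.sum_union hdisj, hLU, hsum]
    refine ⟨L, U, hLs, hUs, hdisj, ?_, Or.inr ⟨hLU, hsum2, ?_⟩⟩
    · intro h hhH
      unfold xLU
      by_cases hL : h ∈ L
      · rw [if_pos hL]; exact hLm h hL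
      · have hU : h ∈ U := by
          rcases Finset.mem_union.mp (hLU ▸ hhH) with h' | h'
          · exact absurd h' hL
          · exact h'
        rw [if_neg hL, if_pos hU]
        exact hUM h hU
    · intro hu huU hl hlL
      have huH := hUs huU
      have hlH := hLs hlL
      have hne : hl ≠ hu := by
        intro e
        exact (Finset.mem_filter.mp huU).2 (e ▸ hLm hl hlL)
      have h1 : x hl < M hl := by rw [hLm hl hlL]; exact hmM hl hlH
      have h2 : m hu < x hu := by rw [hUM hu huU]; exact hmM hu huH
      have := exchange H A m M n hA hm x hfeas hopt hlH huH hne h1 h2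
      rw [hLm hl hlL, hUM hu huU] at this
      exact this
end

section
/- If disjoint sets L*, U* ⊆ H with L* ∪ U* ⊊ H satisfy L* = {h ∈ H : s(L*,U*) ≤ m_h/A_h} and U* = {h ∈ H : s(L*,U*) ≥ M_h/A_h}, then s(L*,U*) > 0. -/
open Finset

/-- If disjoint `L*, U* ⊆ H` with `L* ∪ U* ⊊ H` satisfy the regular-case fixed-point
conditions, then `s(L*,U*) > 0`. -/
theorem s_pos_of_fixed_point {ι : Type*} [DecidableEq ι] (H : Finset ι)
    (hH : H.Nonempty) (A m M : ι → ℝ) (n : ℝ)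
    (hA : ∀ h ∈ H, 0 < A h) (hm : ∀ h ∈ H, 0 < m h) (hmM : ∀ h ∈ H, m h < M h)
    (hn₁ : ∑ h ∈ H, m h ≤ n) (hn₂ : n ≤ ∑ h ∈ H, M h)
    (L U : Finset ι) (hLH : L ⊆ H) (hUH : U ⊆ H) (hdisj : Disjoint L U)
    (hproper : L ∪ U ⊂ H)
    (hLfix : ∀ h, h ∈ L ↔ h ∈ H ∧ sLU H A m M n L U ≤ m h / A h)
    (hUfix : ∀ h, h ∈ U ↔ h ∈ H ∧ M h / A h ≤ sLU H A m M n L U) :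
    0 < sLU H A m M n L U := by
  by_contra hs
  push_neg at hs
  -- First, U must be empty: any u ∈ U would give 0 < M u / A u ≤ s ≤ 0.
  have hU : U = ∅ := by
    by_contra hne
    obtain ⟨u, hu⟩ := Finset.nonempty_iff_ne_empty.mpr hne
    obtain ⟨huH, hle⟩ := (hUfix u).mp hu
    have hpos : 0 < M u / A u :=
      div_pos (lt_trans (hm u huH) (hmM u huH)) (hA u huH)
    linarith
  subst hU
  have hsub : L ⊂ H := by simpa using hproper
  have hne : (H \ L).Nonempty := by
    rw [Finset.sdiff_nonempty]
    exact fun h => hsub.ne (le_antisymm hLH h)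
  have hsplit : ∑ h ∈ H \ L, m h + ∑ h ∈ L, m h = ∑ h ∈ H, m h :=
    Finset.sum_sdiff hLH
  have hmpos : 0 < ∑ h ∈ H \ L, m h :=
    Finset.sum_pos (fun h hh => hm h (Finset.mem_sdiff.mp hh).1) hne
  have hApos : 0 < ∑ h ∈ H \ (L ∪ ∅), A h := by
    rw [Finset.union_empty]
    exact Finset.sum_pos (fun h hh => hA h (Finset.mem_sdiff.mp hh).1) hne
  have hnum : 0 < n - ∑ h ∈ L, m h - ∑ h ∈ (∅ : Finset ι), M h := by
    simp only [Finset.sum_empty, sub_zero]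
    linarith
  have : 0 < sLU H A m M n L ∅ := div_pos hnum hApos
  linarith
end

section
/- (Characterization of regular optima via strict inequality chains.) A feasible vector x of Problem 1 which is regular (i.e., not every coordinate satisfies x_h ∈ {m_h, M_h}) minimizes f(x) = ∑_{h∈H} A_h²/x_h over all feasible vectors of Problem 1 if and only if there exist disjoint sets L, U ⊆ H with L ∪ U ⊊ H such that x = x^{(L,U)} and, with L^c = H\L and U^c = H\U: max_{h∈L} A_h/m_h ≤ 1/s(L,U) < min_{h∈L^c} A_h/m_h, and max_{h∈U^c} A_h/M_h < 1/s(L,U) ≤ min_{h∈U} A_h/M_h (maxima over empty sets being −∞ and minima over empty sets being +∞). -/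
open Finset

/-- Pointwise convexity inequality for `t ↦ a²/t`. -/
lemma conv_ineq_aux (a x y : ℝ) (hx : 0 < x) (hy : 0 < y) :
    -(a^2/x^2) * (y - x) ≤ a^2/y - a^2/x := by
  have key : a^2/y - a^2/x - (-(a^2/x^2) * (y - x)) = a^2 * (y-x)^2/(x^2*y) := by
    field_simp
    ring
  have h2 : 0 ≤ a^2 * (y-x)^2/(x^2*y) := by positivity
  linarith

/-- Exchange lemma: at an optimum, mass can profitably move from `j` to `i` unless
`A i / x i ≤ A j / x j`. -/
lemma exchange_aux {ι : Type*} [DecidableEq ι] (H : Finset ι) (A m M : ι → ℝ) (n : ℝ)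
    (hm : ∀ h ∈ H, 0 < m h)
    (x : ι → ℝ) (hfeas : Feas1 H m M n x)
    (hopt : ∀ y, Feas1 H m M n y → obj H A x ≤ obj H A y)
    (i j : ι) (hi : i ∈ H) (hj : j ∈ H) (hij : i ≠ j)
    (hAi : 0 < A i) (hAj : 0 < A j)
    (hiM : x i < M i) (hjm : m j < x j) :
    A i / x i ≤ A j / x j := by
  obtain ⟨hpos, hsum, hbd⟩ := hfeas
  have hxi : 0 < x i := hpos i hi
  have hxj : 0 < x j := hpos j hj
  by_contra hcon
  push_neg at hcon
  have hmul : A j * x i < A i * x j := by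
    rwa [div_lt_div_iff₀ hxj hxi] at hcon
  set c : ℝ := (A i)^2 * (x j)^2 - (A j)^2 * (x i)^2 with hc
  have hcpos : 0 < c := by
    have h1 : 0 < A j * x i := mul_pos hAj hxi
    nlinarith
  set d : ℝ := (A j)^2 * x i + (A i)^2 * x j with hd
  have hdpos : 0 < d := by positivity
  clear_value c d
  set ε : ℝ := min (min (M i - x i) (x j - m j)) (c/(2*d)) with hε
  have hεpos : 0 < ε := by
    apply lt_min (lt_min (by linarith) (by linarith))
    exact div_pos hcpos (by linarith)
  have hε1 : ε ≤ M i - x i := le_trans (min_le_left _ _) (min_le_left _ _)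
  have hε2 : ε ≤ x j - m j := le_trans (min_le_left _ _) (min_le_right _ _)
  have hε3 : ε ≤ c/(2*d) := min_le_right _ _
  have hmj : 0 < m j := hm j hj
  have hxjε : 0 < x j - ε := by linarith
  have hxiε : 0 < x i + ε := by linarith
  set y : ι → ℝ := fun h => if h = i then x i + ε else if h = j then x j - ε else x h with hy
  have hyi : y i = x i + ε := by simp [hy]
  have hyj : y j = x j - ε := by simp [hy, hij.symm]
  have hyo : ∀ h, h ≠ i → h ≠ j → y h = x h := fun h h1 h2 => by simp [hy, h1, h2]
  have hsub : ({i, j} : Finset ι) ⊆ H := by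
    intro h hh; simp at hh; rcases hh with rfl | rfl <;> assumption
  have hysum : ∑ h ∈ H, y h = n := by
    have h2 : ∑ h ∈ H, (y h - x h) = ∑ h ∈ ({i, j} : Finset ι), (y h - x h) :=
      (Finset.sum_subset hsub (fun h _ hh => by
        simp only [Finset.mem_insert, Finset.mem_singleton, not_or] at hh
        rw [hyo h hh.1 hh.2]; ring)).symm
    rw [Finset.sum_pair hij, hyi, hyj] at h2
    rw [Finset.sum_sub_distrib, hsum] at h2
    linarith
  have hyfeas : Feas1 H m M n y := by
    refine ⟨fun h hh => ?_, hysum, fun h hh => ?_⟩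
    · rcases eq_or_ne h i with rfl | h1
      · rw [hyi]; linarith
      rcases eq_or_ne h j with rfl | h2
      · rw [hyj]; linarith
      · rw [hyo h h1 h2]; exact hpos h hh
    · rcases eq_or_ne h i with rfl | h1
      · rw [hyi]; constructor <;> [linarith [(hbd h hh).1]; linarith]
      rcases eq_or_ne h j with rfl | h2
      · rw [hyj]; constructor <;> [linarith; linarith [(hbd h hh).2]]
      · rw [hyo h h1 h2]; exact hbd h hh
  have hobj : obj H A y - obj H A x =
      ((A i)^2 / (x i + ε) - (A i)^2 / x i) + ((A j)^2 / (x j - ε) - (A j)^2 / x j) := by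
    unfold obj
    rw [← Finset.sum_sub_distrib]
    rw [← Finset.sum_subset hsub (fun h _ hh => by
      simp only [Finset.mem_insert, Finset.mem_singleton, not_or] at hh
      rw [hyo h hh.1 hh.2]; ring)]
    rw [Finset.sum_pair hij, hyi, hyj]
  have hkey : ((A i)^2 / (x i + ε) - (A i)^2 / x i) + ((A j)^2 / (x j - ε) - (A j)^2 / x j)
      = ε * (-c + ε * d) / (x i * (x i + ε) * (x j * (x j - ε))) := by
    rw [hc, hd]
    field_simp
    ring
  have hneg : ε * (-c + ε * d) / (x i * (x i + ε) * (x j * (x j - ε))) < 0 := by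
    apply div_neg_of_neg_of_pos
    · apply mul_neg_of_pos_of_neg hεpos
      have h4 : ε * d ≤ (c/(2*d)) * d := mul_le_mul_of_nonneg_right hε3 hdpos.le
      have h5 : (c/(2*d)) * d = c/2 := by field_simp
      rw [h5] at h4
      linarith
    · positivity
  have := hopt y hyfeas
  rw [hkey] at hobj
  linarith

/-- Sufficiency: the strict-chain conditions imply optimality. -/
lemma suffic_aux {ι : Type*} [DecidableEq ι] (H : Finset ι) (A m M : ι → ℝ) (n : ℝ)
    (hA : ∀ h ∈ H, 0 < A h)
    (x : ι → ℝ) (hfeas : Feas1 H m M n x)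
    (L U : Finset ι) (hLH : L ⊆ H) (hUH : U ⊆ H) (hssub : L ∪ U ⊂ H)
    (hxeq : ∀ h ∈ H, x h = xLU H A m M n L U h)
    (hL : ∀ h ∈ L, A h / m h ≤ 1 / sLU H A m M n L U)
    (hU : ∀ h ∈ U, 1 / sLU H A m M n L U ≤ A h / M h) :
    ∀ y, Feas1 H m M n y → obj H A x ≤ obj H A y := by
  obtain ⟨hpos, hsum, hbd⟩ := hfeas
  set s : ℝ := sLU H A m M n L U with hs
  obtain ⟨h₁, hh₁H, hh₁⟩ := Finset.exists_of_ssubset hssub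
  simp only [Finset.mem_union, not_or] at hh₁
  have hx₁ : x h₁ = A h₁ * s := by
    rw [hxeq h₁ hh₁H]; unfold xLU; rw [if_neg hh₁.1, if_neg hh₁.2]
  have hspos : 0 < s := by
    have h0 := hpos h₁ hh₁H
    rw [hx₁] at h0
    nlinarith [hA h₁ hh₁H]
  intro y hyfeas
  obtain ⟨hypos, hysum, hybd⟩ := hyfeas
  have step1 : ∀ h ∈ H, -(1/s^2) * (y h - x h) ≤ (A h)^2 / y h - (A h)^2 / x h := by
    intro h hh
    have hxh : 0 < x h := hpos h hh
    have hyh : 0 < y h := hypos h hh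
    have hAh : 0 < A h := hA h hh
    have hc := conv_ineq_aux (A h) (x h) (y h) hxh hyh
    have hmid : -(1/s^2) * (y h - x h) ≤ -((A h)^2/(x h)^2) * (y h - x h) := by
      by_cases hhL : h ∈ L
      · have hxm : x h = m h := by
          rw [hxeq h hh]; unfold xLU; rw [if_pos hhL]
        have hmh : 0 < m h := hxm ▸ hxh
        have h1 : (A h / m h)^2 ≤ (1/s)^2 :=
          pow_le_pow_left₀ (div_nonneg hAh.le hmh.le) (hL h hhL) 2
        rw [div_pow, div_pow, one_pow] at h1
        rw [hxm] at hc ⊢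
        have ht : 0 ≤ y h - m h := by linarith [(hybd h hh).1]
        nlinarith
      · by_cases hhU : h ∈ U
        · have hxM : x h = M h := by
            rw [hxeq h hh]; unfold xLU; rw [if_neg hhL, if_pos hhU]
          have hMh : 0 < M h := hxM ▸ hxh
          have h1 : (1/s)^2 ≤ (A h / M h)^2 :=
            pow_le_pow_left₀ (by positivity) (hU h hhU) 2
          rw [div_pow, div_pow, one_pow] at h1
          rw [hxM] at hc ⊢
          have ht : y h - M h ≤ 0 := by linarith [(hybd h hh).2]
          nlinarith
        · have hxf : x h = A h * s := by
            rw [hxeq h hh]; unfold xLU; rw [if_neg hhL, if_neg hhU]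
          have h1 : (A h)^2/(x h)^2 = 1/s^2 := by
            rw [hxf, mul_pow]
            field_simp
          rw [h1]
    linarith
  have t1 : ∑ h ∈ H, (-(1/s^2) * (y h - x h)) ≤ ∑ h ∈ H, ((A h)^2/y h - (A h)^2/x h) :=
    Finset.sum_le_sum step1
  have t2 : ∑ h ∈ H, (-(1/s^2) * (y h - x h)) = -(1/s^2) * ∑ h ∈ H, (y h - x h) :=
    (Finset.mul_sum _ _ _).symm
  have t3 : ∑ h ∈ H, (y h - x h) = 0 := by
    rw [Finset.sum_sub_distrib, hsum, hysum]; ring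
  have t4 : ∑ h ∈ H, ((A h)^2/y h - (A h)^2/x h) = obj H A y - obj H A x := by
    rw [Finset.sum_sub_distrib]; rfl
  rw [t2, t3, t4] at t1
  simp at t1
  linarith

/-- Characterization of regular optima via strict inequality chains: a feasible regular
allocation `x` is optimal for Problem 1 iff `x = x^{(L,U)}` on `H` for some disjoint
`L, U ⊆ H` with `L ∪ U ⊊ H` satisfying
`max_{h∈L} A_h/m_h ≤ 1/s(L,U) < min_{h∈H\L} A_h/m_h` and
`max_{h∈H\U} A_h/M_h < 1/s(L,U) ≤ min_{h∈U} A_h/M_h`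
(maxima/minima over empty sets read as `−∞`/`+∞`, i.e. the corresponding conditions are
vacuous, which is expressed below by universal quantification). -/
theorem regular_optimum_iff_strict_chains {ι : Type*} [DecidableEq ι] (H : Finset ι)
    (hH : H.Nonempty) (A m M : ι → ℝ) (n : ℝ)
    (hA : ∀ h ∈ H, 0 < A h) (hm : ∀ h ∈ H, 0 < m h) (hmM : ∀ h ∈ H, m h < M h)
    (hn₁ : ∑ h ∈ H, m h ≤ n) (hn₂ : n ≤ ∑ h ∈ H, M h)
    (x : ι → ℝ) (hfeas : Feas1 H m M n x)
    (hreg : ¬ ∀ h ∈ H, x h = m h ∨ x h = M h) :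
    (∀ y, Feas1 H m M n y → obj H A x ≤ obj H A y) ↔
      ∃ L U : Finset ι, L ⊆ H ∧ U ⊆ H ∧ Disjoint L U ∧ L ∪ U ⊂ H ∧
        (∀ h ∈ H, x h = xLU H A m M n L U h) ∧
        (∀ h ∈ L, A h / m h ≤ 1 / sLU H A m M n L U) ∧
        (∀ h ∈ H \ L, 1 / sLU H A m M n L U < A h / m h) ∧
        (∀ h ∈ H \ U, A h / M h < 1 / sLU H A m M n L U) ∧
        (∀ h ∈ U, 1 / sLU H A m M n L U ≤ A h / M h) := by
  constructor
  · -- necessity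
    intro hopt
    push_neg at hreg
    obtain ⟨h₀, hh₀H, hreg₀⟩ := hreg
    obtain ⟨hpos, hsum, hbd⟩ := hfeas
    have hx₀m : m h₀ < x h₀ := lt_of_le_of_ne (hbd h₀ hh₀H).1 (Ne.symm hreg₀.1)
    have hx₀M : x h₀ < M h₀ := lt_of_le_of_ne (hbd h₀ hh₀H).2 hreg₀.2
    have hA₀ := hA h₀ hh₀H
    have hx₀ := hpos h₀ hh₀H
    set s := x h₀ / A h₀ with hsdef
    have hspos : 0 < s := div_pos hx₀ hA₀
    have hAs : A h₀ * s = x h₀ := by rw [hsdef]; field_simp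
    have hinv : 1 / s = A h₀ / x h₀ := by rw [hsdef, one_div_div]
    -- key monotonicity facts from the exchange lemma
    have key1 : ∀ h ∈ H, m h < x h → x h ≤ A h * s := by
      intro h hh hmh
      rcases eq_or_ne h h₀ with rfl | hne
      · rw [hAs]
      · have hex := exchange_aux H A m M n hm x ⟨hpos, hsum, hbd⟩ hopt h₀ h hh₀H hh hne.symm
          hA₀ (hA h hh) hx₀M hmh
        rw [← hinv] at hex
        rw [div_le_div_iff₀ hspos (hpos h hh)] at hex
        linarith
    have key2 : ∀ h ∈ H, x h < M h → A h * s ≤ x h := by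
      intro h hh hMh
      rcases eq_or_ne h h₀ with rfl | hne
      · rw [hAs]
      · have hex := exchange_aux H A m M n hm x ⟨hpos, hsum, hbd⟩ hopt h h₀ hh hh₀H hne
          (hA h hh) hA₀ hMh hx₀m
        rw [← hinv] at hex
        rw [div_le_div_iff₀ (hpos h hh) hspos] at hex
        linarith
    set L := H.filter (fun h => A h * s ≤ m h) with hLdef
    set U := H.filter (fun h => M h ≤ A h * s) with hUdef
    have hLH : L ⊆ H := Finset.filter_subset _ _
    have hUH : U ⊆ H := Finset.filter_subset _ _
    have hdisj : Disjoint L U := by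
      rw [Finset.disjoint_left]
      intro a haL haU
      rw [hLdef, Finset.mem_filter] at haL
      rw [hUdef, Finset.mem_filter] at haU
      linarith [hmM a haL.1, haL.2, haU.2]
    have hh₀L : h₀ ∉ L := by
      intro hc
      have := (Finset.mem_filter.mp hc).2
      rw [hAs] at this; linarith
    have hh₀U : h₀ ∉ U := by
      intro hc
      have := (Finset.mem_filter.mp hc).2
      rw [hAs] at this; linarith
    have hssub : L ∪ U ⊂ H := by
      rw [Finset.ssubset_iff_of_subset (Finset.union_subset hLH hUH)]
      exact ⟨h₀, hh₀H, by simp [hh₀L, hh₀U]⟩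
    have hvL : ∀ h ∈ L, x h = m h := by
      intro h hhL
      have hh := hLH hhL
      have hcond := (Finset.mem_filter.mp hhL).2
      by_contra hne
      have h1 : m h < x h := lt_of_le_of_ne (hbd h hh).1 (Ne.symm hne)
      have := key1 h hh h1
      linarith
    have hvU : ∀ h ∈ U, x h = M h := by
      intro h hhU
      have hh := hUH hhU
      have hcond := (Finset.mem_filter.mp hhU).2
      by_contra hne
      have h1 : x h < M h := lt_of_le_of_ne (hbd h hh).2 hne
      have := key2 h hh h1
      linarith
    have hvF : ∀ h ∈ H, h ∉ L → h ∉ U → x h = A h * s := by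
      intro h hh hL' hU'
      have hL2 : m h < A h * s := by
        by_contra hc; push_neg at hc
        exact hL' (Finset.mem_filter.mpr ⟨hh, hc⟩)
      have hU2 : A h * s < M h := by
        by_contra hc; push_neg at hc
        exact hU' (Finset.mem_filter.mpr ⟨hh, hc⟩)
      apply le_antisymm
      · rcases lt_or_eq_of_le (hbd h hh).1 with h1 | h1
        · exact key1 h hh h1
        · rw [← h1]; linarith
      · rcases lt_or_eq_of_le (hbd h hh).2 with h1 | h1
        · exact key2 h hh h1
        · rw [h1]; linarith
    have hsplit : ∑ h ∈ H \ (L ∪ U), x h + ∑ h ∈ L ∪ U, x h = ∑ h ∈ H, x h :=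
      Finset.sum_sdiff (Finset.union_subset hLH hUH)
    have hsplit2 : ∑ h ∈ L ∪ U, x h = ∑ h ∈ L, x h + ∑ h ∈ U, x h :=
      Finset.sum_union hdisj
    have hFsum : ∑ h ∈ H \ (L ∪ U), x h = (∑ h ∈ H \ (L ∪ U), A h) * s := by
      rw [Finset.sum_mul]
      apply Finset.sum_congr rfl
      intro h hh
      rw [Finset.mem_sdiff, Finset.mem_union, not_or] at hh
      exact hvF h hh.1 hh.2.1 hh.2.2
    have hApos : 0 < ∑ h ∈ H \ (L ∪ U), A h := by
      apply Finset.sum_pos (fun h hh => hA h (Finset.mem_sdiff.mp hh).1)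
      exact ⟨h₀, Finset.mem_sdiff.mpr ⟨hh₀H, by simp [hh₀L, hh₀U]⟩⟩
    have hLx : ∑ h ∈ L, m h = ∑ h ∈ L, x h := Finset.sum_congr rfl (fun h hh => (hvL h hh).symm)
    have hUx : ∑ h ∈ U, M h = ∑ h ∈ U, x h := Finset.sum_congr rfl (fun h hh => (hvU h hh).symm)
    have hseq : sLU H A m M n L U = s := by
      unfold sLU
      have hnum : n - ∑ h ∈ L, m h - ∑ h ∈ U, M h = (∑ h ∈ H \ (L ∪ U), A h) * s := by
        rw [hLx, hUx, ← hFsum]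
        linarith
      rw [hnum]
      field_simp
    refine ⟨L, U, hLH, hUH, hdisj, hssub, ?_, ?_, ?_, ?_, ?_⟩
    · intro h hh
      unfold xLU
      rw [hseq]
      by_cases hhL : h ∈ L
      · rw [if_pos hhL]; exact hvL h hhL
      by_cases hhU : h ∈ U
      · rw [if_neg hhL, if_pos hhU]; exact hvU h hhU
      · rw [if_neg hhL, if_neg hhU]; exact hvF h hh hhL hhU
    · intro h hhL
      rw [hseq]
      have hcond := (Finset.mem_filter.mp hhL).2
      rw [div_le_div_iff₀ (hm h (hLH hhL)) hspos, one_mul]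
      exact hcond
    · intro h hh
      rw [Finset.mem_sdiff] at hh
      rw [hseq]
      have hcond : m h < A h * s := by
        by_contra hc; push_neg at hc
        exact hh.2 (Finset.mem_filter.mpr ⟨hh.1, hc⟩)
      rw [div_lt_div_iff₀ hspos (hm h hh.1), one_mul]
      exact hcond
    · intro h hh
      rw [Finset.mem_sdiff] at hh
      rw [hseq]
      have hcond : A h * s < M h := by
        by_contra hc; push_neg at hc
        exact hh.2 (Finset.mem_filter.mpr ⟨hh.1, hc⟩)
      have hMh : 0 < M h := lt_trans (hm h hh.1) (hmM h hh.1)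
      rw [div_lt_div_iff₀ hMh hspos, one_mul]
      exact hcond
    · intro h hhU
      rw [hseq]
      have hcond := (Finset.mem_filter.mp hhU).2
      have hMh : 0 < M h := lt_trans (hm h (hUH hhU)) (hmM h (hUH hhU))
      rw [div_le_div_iff₀ hspos hMh, one_mul]
      exact hcond
  · rintro ⟨L, U, hLH, hUH, hdisj, hssub, hxeq, hL, _, _, hU⟩
    exact suffic_aux H A m M n hA x hfeas L U hLH hUH hssub hxeq hL hU
end

section
/- (Monotonicity of the set function s, part 1.) Let A ⊆ B ⊆ H and C ⊆ D ⊆ H with B ∪ D ⊊ H and B ∩ D = ∅. Then s(A,C) ≥ s(B,D) if and only if s(A,C)·(∑_{h∈B\A} A_h + ∑_{h∈D\C} A_h) ≤ ∑_{h∈B\A} m_h + ∑_{h∈D\C} M_h. -/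
open Finset

/-- Monotonicity of the set function `s`, part 1: for `A ⊆ B ⊆ H`, `C ⊆ D ⊆ H` with
`B ∪ D ⊊ H` and `B ∩ D = ∅`,
`s(A,C) ≥ s(B,D)  ↔  s(A,C)·(∑_{B\A} A_h + ∑_{D\C} A_h) ≤ ∑_{B\A} m_h + ∑_{D\C} M_h`. -/
theorem s_monotonicity_part1 {ι : Type*} [DecidableEq ι] (H : Finset ι) (hH : H.Nonempty)
    (A m M : ι → ℝ) (n : ℝ)
    (hA : ∀ h ∈ H, 0 < A h) (hm : ∀ h ∈ H, 0 < m h) (hmM : ∀ h ∈ H, m h < M h)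
    (hn₁ : ∑ h ∈ H, m h ≤ n) (hn₂ : n ≤ ∑ h ∈ H, M h)
    (SA SB SC SD : Finset ι)
    (hAB : SA ⊆ SB) (hBH : SB ⊆ H) (hCD : SC ⊆ SD) (hDH : SD ⊆ H)
    (hBD : SB ∪ SD ⊂ H) (hdisj : Disjoint SB SD) :
    sLU H A m M n SA SC ≥ sLU H A m M n SB SD ↔
      sLU H A m M n SA SC * (∑ h ∈ SB \ SA, A h + ∑ h ∈ SD \ SC, A h) ≤
        ∑ h ∈ SB \ SA, m h + ∑ h ∈ SD \ SC, M h := by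
  classical
  -- notation
  set s1 := sLU H A m M n SA SC with hs1
  have hBDH : SB ∪ SD ⊆ H := hBD.subset
  -- nonemptiness of H \ (SB ∪ SD)
  obtain ⟨x, hxH, hxBD⟩ := Finset.exists_of_ssubset hBD
  have hd2pos : 0 < ∑ h ∈ H \ (SB ∪ SD), A h := by
    apply Finset.sum_pos
    · intro h hh; exact hA h (Finset.mem_sdiff.mp hh).1
    · exact ⟨x, Finset.mem_sdiff.mpr ⟨hxH, hxBD⟩⟩
  -- set equality splitting H \ (SA ∪ SC)
  have hABd : Disjoint SA SD := Finset.disjoint_of_subset_left hAB hdisj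
  have hCBd : Disjoint SB SC := Finset.disjoint_of_subset_right hCD hdisj
  have hset : H \ (SA ∪ SC) = (H \ (SB ∪ SD)) ∪ ((SB \ SA) ∪ (SD \ SC)) := by
    ext y
    simp only [Finset.mem_sdiff, Finset.mem_union]
    constructor
    · rintro ⟨hyH, hy⟩
      push_neg at hy
      by_cases hyB : y ∈ SB
      · exact Or.inr (Or.inl ⟨hyB, hy.1⟩)
      · by_cases hyD : y ∈ SD
        · exact Or.inr (Or.inr ⟨hyD, hy.2⟩)
        · exact Or.inl ⟨hyH, by tauto⟩
    · rintro (⟨hyH, hy⟩ | ⟨hyB, hyA⟩ | ⟨hyD, hyC⟩)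
      · push_neg at hy
        exact ⟨hyH, by push_neg; exact ⟨fun h => hy.1 (hAB h),
            fun h => hy.2 (hCD h)⟩⟩
      · refine ⟨hBH hyB, ?_⟩
        push_neg
        exact ⟨hyA, fun h => (Finset.disjoint_left.mp hCBd hyB) h⟩
      · refine ⟨hDH hyD, ?_⟩
        push_neg
        exact ⟨fun h => (Finset.disjoint_left.mp hABd h) hyD, hyC⟩
  have hdisj1 : Disjoint (SB \ SA) (SD \ SC) :=
    Finset.disjoint_of_subset_left Finset.sdiff_subset
      (Finset.disjoint_of_subset_right Finset.sdiff_subset hdisj)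
  have hdisj2 : Disjoint (H \ (SB ∪ SD)) ((SB \ SA) ∪ (SD \ SC)) := by
    apply Finset.disjoint_left.mpr
    intro y hy hy'
    have := (Finset.mem_sdiff.mp hy).2
    rcases Finset.mem_union.mp hy' with h | h
    · exact this (Finset.mem_union.mpr (Or.inl (Finset.mem_sdiff.mp h).1))
    · exact this (Finset.mem_union.mpr (Or.inr (Finset.mem_sdiff.mp h).1))
  have hsplit : ∀ f : ι → ℝ, ∑ h ∈ H \ (SA ∪ SC), f h =
      ∑ h ∈ H \ (SB ∪ SD), f h + (∑ h ∈ SB \ SA, f h + ∑ h ∈ SD \ SC, f h) := by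
    intro f
    rw [hset, Finset.sum_union hdisj2, Finset.sum_union hdisj1]
  have hd1 : ∑ h ∈ H \ (SA ∪ SC), A h =
      ∑ h ∈ H \ (SB ∪ SD), A h + (∑ h ∈ SB \ SA, A h + ∑ h ∈ SD \ SC, A h) := hsplit A
  have hd1pos : 0 < ∑ h ∈ H \ (SA ∪ SC), A h := by
    have h1 : 0 ≤ ∑ h ∈ SB \ SA, A h :=
      Finset.sum_nonneg fun h hh => (hA h (hBH (Finset.mem_sdiff.mp hh).1)).le
    have h2 : 0 ≤ ∑ h ∈ SD \ SC, A h :=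
      Finset.sum_nonneg fun h hh => (hA h (hDH (Finset.mem_sdiff.mp hh).1)).le
    linarith
  -- sum splits for m and M
  have hmB : ∑ h ∈ SB, m h = ∑ h ∈ SA, m h + ∑ h ∈ SB \ SA, m h := by
    rw [← Finset.sum_sdiff hAB]; ring
  have hMD : ∑ h ∈ SD, M h = ∑ h ∈ SC, M h + ∑ h ∈ SD \ SC, M h := by
    rw [← Finset.sum_sdiff hCD]; ring
  -- s1 * d1 = num1
  have hmul : s1 * ∑ h ∈ H \ (SA ∪ SC), A h =
      n - ∑ h ∈ SA, m h - ∑ h ∈ SC, M h := by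
    rw [hs1, sLU, div_mul_cancel₀ _ hd1pos.ne']
  rw [ge_iff_le, sLU, div_le_iff₀ hd2pos]
  have hmul2 : s1 * ∑ h ∈ H \ (SB ∪ SD), A h =
      s1 * ∑ h ∈ H \ (SA ∪ SC), A h
        - s1 * (∑ h ∈ SB \ SA, A h + ∑ h ∈ SD \ SC, A h) := by
    rw [hd1]; ring
  constructor <;> intro h <;> linarith
end

section
/- (Monotonicity of the set function s, part 2.) Let A ⊆ B ⊆ H and C ⊆ D ⊆ H with A ∪ D ⊊ H, A ∩ D = ∅, B ∪ C ⊊ H and B ∩ C = ∅. Then s(A,D) ≥ s(B,C) if and only if s(A,D)·(∑_{h∈B\A} A_h − ∑_{h∈D\C} A_h) ≤ ∑_{h∈B\A} m_h − ∑_{h∈D\C} M_h. -/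
open Finset

/-- Monotonicity of the set function `s`, part 2: for `A ⊆ B ⊆ H`, `C ⊆ D ⊆ H` with
`A ∪ D ⊊ H`, `A ∩ D = ∅`, `B ∪ C ⊊ H`, `B ∩ C = ∅`,
`s(A,D) ≥ s(B,C)  ↔  s(A,D)·(∑_{B\A} A_h − ∑_{D\C} A_h) ≤ ∑_{B\A} m_h − ∑_{D\C} M_h`. -/
theorem s_monotonicity_part2 {ι : Type*} [DecidableEq ι] (H : Finset ι) (hH : H.Nonempty)
    (A m M : ι → ℝ) (n : ℝ)
    (hA : ∀ h ∈ H, 0 < A h) (hm : ∀ h ∈ H, 0 < m h) (hmM : ∀ h ∈ H, m h < M h)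
    (hn₁ : ∑ h ∈ H, m h ≤ n) (hn₂ : n ≤ ∑ h ∈ H, M h)
    (SA SB SC SD : Finset ι)
    (hAB : SA ⊆ SB) (hBH : SB ⊆ H) (hCD : SC ⊆ SD) (hDH : SD ⊆ H)
    (hAD : SA ∪ SD ⊂ H) (hADdisj : Disjoint SA SD)
    (hBC : SB ∪ SC ⊂ H) (hBCdisj : Disjoint SB SC) :
    sLU H A m M n SA SD ≥ sLU H A m M n SB SC ↔
      sLU H A m M n SA SD * (∑ h ∈ SB \ SA, A h - ∑ h ∈ SD \ SC, A h) ≤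
        ∑ h ∈ SB \ SA, m h - ∑ h ∈ SD \ SC, M h := by
  set T1 : ℝ := ∑ h ∈ H \ (SA ∪ SD), A h with hT1def
  set T2 : ℝ := ∑ h ∈ H \ (SB ∪ SC), A h with hT2def
  have hT1 : 0 < T1 := by
    obtain ⟨x, hxH, hx⟩ := Finset.exists_of_ssubset hAD
    exact Finset.sum_pos (fun i hi => hA i (Finset.mem_sdiff.mp hi).1)
      ⟨x, Finset.mem_sdiff.mpr ⟨hxH, hx⟩⟩
  have hT2 : 0 < T2 := by
    obtain ⟨x, hxH, hx⟩ := Finset.exists_of_ssubset hBC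
    exact Finset.sum_pos (fun i hi => hA i (Finset.mem_sdiff.mp hi).1)
      ⟨x, Finset.mem_sdiff.mpr ⟨hxH, hx⟩⟩
  set N1 : ℝ := n - ∑ h ∈ SA, m h - ∑ h ∈ SD, M h with hN1def
  set N2 : ℝ := n - ∑ h ∈ SB, m h - ∑ h ∈ SC, M h with hN2def
  -- sum identities
  have hBA_A : ∑ h ∈ SB \ SA, A h + ∑ h ∈ SA, A h = ∑ h ∈ SB, A h :=
    Finset.sum_sdiff hAB
  have hBA_m : ∑ h ∈ SB \ SA, m h + ∑ h ∈ SA, m h = ∑ h ∈ SB, m h :=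
    Finset.sum_sdiff hAB
  have hDC_A : ∑ h ∈ SD \ SC, A h + ∑ h ∈ SC, A h = ∑ h ∈ SD, A h :=
    Finset.sum_sdiff hCD
  have hDC_M : ∑ h ∈ SD \ SC, M h + ∑ h ∈ SC, M h = ∑ h ∈ SD, M h :=
    Finset.sum_sdiff hCD
  have hT1' : T1 + (∑ h ∈ SA, A h + ∑ h ∈ SD, A h) = ∑ h ∈ H, A h := by
    rw [hT1def, ← Finset.sum_union hADdisj]
    exact Finset.sum_sdiff hAD.subset
  have hT2' : T2 + (∑ h ∈ SB, A h + ∑ h ∈ SC, A h) = ∑ h ∈ H, A h := by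
    rw [hT2def, ← Finset.sum_union hBCdisj]
    exact Finset.sum_sdiff hBC.subset
  have hΔA : ∑ h ∈ SB \ SA, A h - ∑ h ∈ SD \ SC, A h = T1 - T2 := by linarith
  have hΔN : ∑ h ∈ SB \ SA, m h - ∑ h ∈ SD \ SC, M h = N1 - N2 := by
    rw [hN1def, hN2def]; linarith
  have hs1 : sLU H A m M n SA SD = N1 / T1 := rfl
  have hs2 : sLU H A m M n SB SC = N2 / T2 := rfl
  rw [hs1, hs2, hΔA, hΔN, ge_iff_le, div_le_div_iff₀ hT2 hT1, mul_sub,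
    div_mul_cancel₀ _ hT1.ne']
  constructor
  · intro h
    have h2 : N2 ≤ N1 / T1 * T2 := by
      rw [div_mul_eq_mul_div, le_div_iff₀ hT1]; linarith
    linarith
  · intro h
    have h2 : N2 ≤ N1 / T1 * T2 := by linarith
    rw [div_mul_eq_mul_div, le_div_iff₀ hT1] at h2
    linarith
end

section
/- (Optimality conditions for the one-sided problem.) Problem 2 has a unique optimal solution. Moreover, a vector x* = (x*_h, h ∈ H) with all x*_h > 0 minimizes f(x) = ∑_{h∈H} A_h²/x_h subject to ∑_{h∈H} x*_h = n and x*_h ≤ M_h for all h ∈ H, if and only if there exists U* ⊆ H such that x*_h = M_h for h ∈ U* and x*_h = A_h·s(∅,U*) for h ∈ H\U*, where either (CASE I) U* ⊊ H and U* = {h ∈ H : A_h·s(∅,U*) ≥ M_h}, or (CASE II) U* = H and n = ∑_{h∈H} M_h. -/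
open Finset

/-- Feasibility for Problem 2 (one-sided, upper bounds only). -/
def Feas2 {ι : Type*} (H : Finset ι) (M : ι → ℝ) (n : ℝ) (x : ι → ℝ) : Prop :=
  (∀ h ∈ H, 0 < x h) ∧ (∑ h ∈ H, x h = n) ∧ ∀ h ∈ H, x h ≤ M h

/-- `s(∅,U) = (n − ∑_{h∈U} M_h) / ∑_{h∈H\U} A_h`. -/
noncomputable def sU {ι : Type*} [DecidableEq ι] (H : Finset ι) (A M : ι → ℝ) (n : ℝ)
    (U : Finset ι) : ℝ :=
  (n - ∑ h ∈ U, M h) / ∑ h ∈ H \ U, A h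

/-- Auxiliary: the "active set update" map `T(U) = {h ∈ H : M h ≤ A h · s(∅,U)}`. -/
noncomputable def Tmap {ι : Type*} [DecidableEq ι] (H : Finset ι) (A M : ι → ℝ) (n : ℝ)
    (U : Finset ι) : Finset ι :=
  H.filter (fun h => M h ≤ A h * sU H A M n U)

section Aux

variable {ι : Type*} [DecidableEq ι] {H : Finset ι} {A M : ι → ℝ} {n : ℝ}

lemma Dpos (hA : ∀ h ∈ H, 0 < A h) {U : Finset ι} (hUH : U ⊆ H) (hne : U ≠ H) :
    0 < ∑ h ∈ H \ U, A h := by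
  obtain ⟨h₀, hh₀⟩ := exists_of_ssubset (Finset.ssubset_iff_subset_ne.2 ⟨hUH, hne⟩)
  exact Finset.sum_pos' (fun i hi => (hA i (mem_sdiff.1 hi).1).le)
    ⟨h₀, mem_sdiff.2 ⟨hh₀.1, hh₀.2⟩, hA h₀ hh₀.1⟩

lemma spos (hA : ∀ h ∈ H, 0 < A h) {U : Finset ι} (hUH : U ⊆ H) (hne : U ≠ H)
    (hN : ∑ h ∈ U, M h < n) : 0 < sU H A M n U :=
  div_pos (by linarith) (Dpos hA hUH hne)

lemma sD (hA : ∀ h ∈ H, 0 < A h) {U : Finset ι} (hUH : U ⊆ H) (hne : U ≠ H) :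
    sU H A M n U * ∑ h ∈ H \ U, A h = n - ∑ h ∈ U, M h :=
  div_mul_cancel₀ _ (Dpos hA hUH hne).ne'

lemma step (hA : ∀ h ∈ H, 0 < A h) (hlt : n < ∑ h ∈ H, M h) {U : Finset ι}
    (h1 : U ⊆ H) (h2 : U ≠ H) (h3 : ∑ h ∈ U, M h < n)
    (h4 : ∀ h ∈ U, M h ≤ A h * sU H A M n U) :
    Tmap H A M n U ⊆ H ∧ Tmap H A M n U ≠ H ∧ (∑ h ∈ Tmap H A M n U, M h < n) ∧
    (∀ h ∈ Tmap H A M n U, M h ≤ A h * sU H A M n (Tmap H A M n U)) ∧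
    U ⊆ Tmap H A M n U := by
  set V := Tmap H A M n U with hV
  set s := sU H A M n U with hs
  have hmemV : ∀ h, h ∈ V ↔ h ∈ H ∧ M h ≤ A h * s := fun h => mem_filter
  have hVH : V ⊆ H := filter_subset _ _
  have hUV : U ⊆ V := fun h hh => (hmemV h).2 ⟨h1 hh, h4 h hh⟩
  have hD : 0 < ∑ h ∈ H \ U, A h := Dpos hA h1 h2
  have hspos : 0 < s := spos hA h1 h2 h3
  have hsD : s * ∑ h ∈ H \ U, A h = n - ∑ h ∈ U, M h := sD hA h1 h2
  have hm_le : ∑ h ∈ V \ U, M h ≤ (∑ h ∈ V \ U, A h) * s := by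
    rw [Finset.sum_mul]
    refine Finset.sum_le_sum fun h hh => ?_
    have := ((hmemV h).1 (mem_sdiff.1 hh).1).2
    linarith [this]
  have hVne : V ≠ H := by
    intro hVH'
    have hsub : H \ U ⊆ V := hVH' ▸ (sdiff_subset)
    have : ∑ h ∈ H \ U, M h ≤ s * ∑ h ∈ H \ U, A h := by
      rw [Finset.mul_sum]
      refine Finset.sum_le_sum fun h hh => ?_
      have := ((hmemV h).1 (hsub hh)).2
      linarith [this]
    have hsplit := Finset.sum_sdiff (f := M) h1
    linarith
  have ha_lt : ∑ h ∈ V \ U, A h < ∑ h ∈ H \ U, A h := by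
    obtain ⟨h₀, hh₀H, hh₀V⟩ := exists_of_ssubset (Finset.ssubset_iff_subset_ne.2 ⟨hVH, hVne⟩)
    refine Finset.sum_lt_sum_of_subset ?_ (i := h₀) (mem_sdiff.2 ⟨hh₀H, fun hc => hh₀V (hUV hc)⟩)
      (by simp [mem_sdiff, hh₀V]) (hA h₀ hh₀H) (fun j hj _ => (hA j (mem_sdiff.1 hj).1).le)
    exact fun x hx => mem_sdiff.2 ⟨hVH (mem_sdiff.1 hx).1, (mem_sdiff.1 hx).2⟩
  have hsplitV := Finset.sum_sdiff (f := M) hUV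
  have hVM : ∑ h ∈ V, M h < n := by
    have : (∑ h ∈ V \ U, A h) * s < (∑ h ∈ H \ U, A h) * s :=
      mul_lt_mul_of_pos_right ha_lt hspos
    nlinarith [hm_le]
  have hsub2 : V \ U ⊆ H \ U := fun x hx =>
    mem_sdiff.2 ⟨hVH (mem_sdiff.1 hx).1, (mem_sdiff.1 hx).2⟩
  have hsetid : (H \ U) \ (V \ U) = H \ V := by
    ext a
    simp only [mem_sdiff]
    constructor
    · rintro ⟨⟨haH, haU⟩, hnv⟩
      exact ⟨haH, fun hav => hnv ⟨hav, haU⟩⟩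
    · rintro ⟨haH, hav⟩
      exact ⟨⟨haH, fun hu => hav (hUV hu)⟩, fun ⟨hv, _⟩ => hav hv⟩
  have hDsplit : ∑ h ∈ H \ V, A h + ∑ h ∈ V \ U, A h = ∑ h ∈ H \ U, A h := by
    rw [← hsetid]; exact Finset.sum_sdiff hsub2
  have hDV : 0 < ∑ h ∈ H \ V, A h := Dpos hA hVH hVne
  have hs_le : s ≤ sU H A M n V := by
    rw [hs, sU, sU, div_le_div_iff₀ hD hDV]
    have e1 : (∑ h ∈ V \ U, M h) * (∑ h ∈ H \ U, A h) ≤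
        (n - ∑ h ∈ U, M h) * (∑ h ∈ V \ U, A h) := by
      calc (∑ h ∈ V \ U, M h) * (∑ h ∈ H \ U, A h)
          ≤ ((∑ h ∈ V \ U, A h) * s) * (∑ h ∈ H \ U, A h) :=
            mul_le_mul_of_nonneg_right hm_le hD.le
        _ = (n - ∑ h ∈ U, M h) * (∑ h ∈ V \ U, A h) := by
            rw [mul_comm _ s, mul_assoc, mul_comm (∑ h ∈ V \ U, A h), ← mul_assoc, hsD]
    nlinarith [hDsplit, hsplitV]
  refine ⟨hVH, hVne, hVM, fun h hh => ?_, hUV⟩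
  have := ((hmemV h).1 hh).2
  have hAh := hA h (hVH hh)
  calc M h ≤ A h * s := this
    _ ≤ A h * sU H A M n V := mul_le_mul_of_nonneg_left hs_le hAh.le

lemma exists_fixed (hH : H.Nonempty) (hA : ∀ h ∈ H, 0 < A h) (hn₁ : 0 < n)
    (hlt : n < ∑ h ∈ H, M h) :
    ∃ U : Finset ι, U ⊆ H ∧ U ≠ H ∧ (∑ h ∈ U, M h < n) ∧
      (∀ h, h ∈ U ↔ h ∈ H ∧ M h ≤ A h * sU H A M n U) := by
  set F : ℕ → Finset ι := fun k => (Tmap H A M n)^[k] ∅ with hF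
  have hFs : ∀ k, F (k+1) = Tmap H A M n (F k) := by
    intro k; rw [hF]; simp [Function.iterate_succ_apply']
  have hinv : ∀ k, F k ⊆ H ∧ F k ≠ H ∧ (∑ h ∈ F k, M h < n) ∧
      (∀ h ∈ F k, M h ≤ A h * sU H A M n (F k)) := by
    intro k
    induction k with
    | zero =>
      refine ⟨by simp [hF], ?_, by simpa [hF] using hn₁, by simp [hF]⟩
      simp only [hF, Function.iterate_zero, id]
      exact fun hc => hH.ne_empty hc.symm
    | succ k ih =>
      obtain ⟨i1, i2, i3, i4⟩ := ih
      obtain ⟨j1, j2, j3, j4, _⟩ := step hA hlt i1 i2 i3 i4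
      rw [hFs k]
      exact ⟨j1, j2, j3, j4⟩
  have hmono : ∀ k, F k ⊆ F (k+1) := by
    intro k
    obtain ⟨i1, i2, i3, i4⟩ := hinv k
    rw [hFs k]
    exact (step hA hlt i1 i2 i3 i4).2.2.2.2
  have hfix : ∃ k, F (k+1) = F k := by
    by_contra hc
    push_neg at hc
    have hcard : ∀ k, k ≤ (F k).card := by
      intro k
      induction k with
      | zero => simp
      | succ k ih =>
        have : F k ⊂ F (k+1) := (Finset.ssubset_iff_subset_ne.2 ⟨hmono k, (hc k).symm⟩)
        have := Finset.card_lt_card this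
        omega
    have h1 := hcard (H.card + 1)
    have h2 := Finset.card_le_card (hinv (H.card + 1)).1
    omega
  obtain ⟨k, hk⟩ := hfix
  obtain ⟨i1, i2, i3, _⟩ := hinv k
  refine ⟨F k, i1, i2, i3, fun h => ?_⟩
  conv_lhs => rw [← hk, hFs k]
  exact mem_filter

lemma key_id {a b c : ℝ} (ha : a ≠ 0) (hb : b ≠ 0) :
    c^2/b = c^2/a + (c^2/a^2)*(a - b) + c^2*(a-b)^2/(a^2*b) := by
  field_simp
  ring

lemma opt_of_struct (hA : ∀ h ∈ H, 0 < A h)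
    (x : ι → ℝ) (hx : Feas2 H M n x) (U : Finset ι)
    (h1 : ∀ h ∈ U, x h = M h) (h2 : ∀ h ∈ H \ U, x h = A h * sU H A M n U)
    (hcase : (U ⊂ H ∧ ∀ h, h ∈ U ↔ h ∈ H ∧ M h ≤ A h * sU H A M n U) ∨
      (U = H ∧ n = ∑ h ∈ H, M h))
    (y : ι → ℝ) (hy : Feas2 H M n y) :
    obj H A x + ∑ h ∈ H, (A h)^2 * (x h - y h)^2 / ((x h)^2 * y h) ≤ obj H A y := by
  obtain ⟨hxpos, hxsum, hxle⟩ := hx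
  obtain ⟨hypos, hysum, hyle⟩ := hy
  have hobj : obj H A y = obj H A x + (∑ h ∈ H, ((A h)^2/(x h)^2) * (x h - y h))
      + ∑ h ∈ H, (A h)^2 * (x h - y h)^2 / ((x h)^2 * y h) := by
    rw [obj, obj, ← Finset.sum_add_distrib, ← Finset.sum_add_distrib]
    exact Finset.sum_congr rfl fun h hh =>
      key_id (hxpos h hh).ne' (hypos h hh).ne'
  have hmain : 0 ≤ ∑ h ∈ H, ((A h)^2/(x h)^2) * (x h - y h) := by
    rcases hcase with ⟨hUss, hUiff⟩ | ⟨hUeq, _⟩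
    · -- CASE I
      set s := sU H A M n U with hs
      obtain ⟨h₀, hh₀H, hh₀U⟩ := exists_of_ssubset hUss
      have hspos : 0 < s := by
        have hx0 : 0 < x h₀ := hxpos h₀ hh₀H
        have := h2 h₀ (mem_sdiff.2 ⟨hh₀H, hh₀U⟩)
        have hA0 := hA h₀ hh₀H
        nlinarith
      have hterm : ∀ h ∈ H, (1/s^2) * (x h - y h) ≤ ((A h)^2/(x h)^2) * (x h - y h) := by
        intro h hh
        by_cases hU : h ∈ U
        · have hxM : x h = M h := h1 h hU
          have hMle : M h ≤ A h * s := ((hUiff h).1 hU).2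
          have hApos := hA h hh
          have hMpos : 0 < M h := hxM ▸ hxpos h hh
          have hc : 1/s^2 ≤ (A h)^2/(x h)^2 := by
            rw [hxM, div_le_div_iff₀ (by positivity) (by positivity)]
            nlinarith
          have hxy : 0 ≤ x h - y h := by
            have := hyle h hh
            rw [hxM]; linarith
          exact mul_le_mul_of_nonneg_right hc hxy
        · have hxv : x h = A h * s := h2 h (mem_sdiff.2 ⟨hh, hU⟩)
          have hApos := hA h hh
          have : (A h)^2/(x h)^2 = 1/s^2 := by
            rw [hxv]
            field_simp
          rw [this]
      calc (0:ℝ) = (1/s^2) * (∑ h ∈ H, (x h - y h)) := by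
            rw [Finset.sum_sub_distrib, hxsum, hysum]; ring
        _ = ∑ h ∈ H, (1/s^2) * (x h - y h) := by rw [Finset.mul_sum]
        _ ≤ _ := Finset.sum_le_sum hterm
    · -- CASE II
      refine Finset.sum_nonneg fun h hh => mul_nonneg (by positivity) ?_
      have hxM : x h = M h := h1 h (hUeq ▸ hh)
      have := hyle h hh
      linarith
  linarith

lemma exists_good (hH : H.Nonempty) (hA : ∀ h ∈ H, 0 < A h) (hM : ∀ h ∈ H, 0 < M h)
    (hn₁ : 0 < n) (hn₂ : n ≤ ∑ h ∈ H, M h) :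
    ∃ (U : Finset ι) (x : ι → ℝ), Feas2 H M n x ∧ U ⊆ H ∧
      (∀ h ∈ U, x h = M h) ∧ (∀ h ∈ H \ U, x h = A h * sU H A M n U) ∧
      ((U ⊂ H ∧ ∀ h, h ∈ U ↔ h ∈ H ∧ M h ≤ A h * sU H A M n U) ∨
        (U = H ∧ n = ∑ h ∈ H, M h)) := by
  rcases eq_or_lt_of_le hn₂ with heq | hlt
  · -- CASE II
    refine ⟨H, M, ⟨hM, heq.symm, fun h _ => le_refl _⟩, le_refl _,
      fun h _ => rfl, fun h hh => ((mem_sdiff.1 hh).2 (mem_sdiff.1 hh).1).elim,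
      Or.inr ⟨rfl, heq⟩⟩
  · -- CASE I
    obtain ⟨U, hUH, hUne, hUM, hUiff⟩ := exists_fixed hH hA hn₁ hlt
    set s := sU H A M n U with hs
    have hspos : 0 < s := spos hA hUH hUne hUM
    have hsD : s * ∑ h ∈ H \ U, A h = n - ∑ h ∈ U, M h := sD hA hUH hUne
    refine ⟨U, fun h => if h ∈ U then M h else A h * s, ⟨?_, ?_, ?_⟩, hUH,
      fun h hh => by simp [hh], fun h hh => by simp [(mem_sdiff.1 hh).2, hs],
      Or.inl ⟨Finset.ssubset_iff_subset_ne.2 ⟨hUH, hUne⟩, hUiff⟩⟩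
    · intro h hh
      by_cases hU : h ∈ U
      · simpa [hU] using hM h hh
      · have := hA h hh
        simp only [hU, if_false]
        positivity
    · rw [← Finset.sum_sdiff hUH]
      have e1 : ∑ h ∈ U, (if h ∈ U then M h else A h * s) = ∑ h ∈ U, M h :=
        Finset.sum_congr rfl fun h hh => by simp [hh]
      have e2 : ∑ h ∈ H \ U, (if h ∈ U then M h else A h * s) = ∑ h ∈ H \ U, A h * s :=
        Finset.sum_congr rfl fun h hh => by simp [(mem_sdiff.1 hh).2]
      rw [e1, e2]
      have : ∑ h ∈ H \ U, A h * s = s * ∑ h ∈ H \ U, A h := by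
        rw [Finset.mul_sum]; exact Finset.sum_congr rfl fun h _ => mul_comm _ _
      rw [this, hsD]; ring
    · intro h hh
      by_cases hU : h ∈ U
      · simp [hU]
      · have : ¬ (M h ≤ A h * s) := fun hc => hU ((hUiff h).2 ⟨hh, hc⟩)
        simp only [hU, if_false]
        linarith [not_le.1 this]

end Aux

/-- Optimality conditions for the one-sided Problem 2: the problem has a unique optimal
solution, and a feasible vector is optimal iff it is of the form `M_h` on `U*`,
`A_h · s(∅,U*)` off `U*`, where either (CASE I) `U* ⊊ H` and
`U* = {h ∈ H : A_h·s(∅,U*) ≥ M_h}`, or (CASE II) `U* = H` and `n = ∑_{h∈H} M_h`. -/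
theorem problem2_optimality_conditions {ι : Type*} [DecidableEq ι] (H : Finset ι)
    (hH : H.Nonempty) (A M : ι → ℝ) (n : ℝ)
    (hA : ∀ h ∈ H, 0 < A h) (hM : ∀ h ∈ H, 0 < M h)
    (hn₁ : 0 < n) (hn₂ : n ≤ ∑ h ∈ H, M h) :
    (∃ x : ι → ℝ, Feas2 H M n x ∧
      (∀ y, Feas2 H M n y → obj H A x ≤ obj H A y) ∧
      (∀ y, Feas2 H M n y → (∀ z, Feas2 H M n z → obj H A y ≤ obj H A z) →
        ∀ h ∈ H, y h = x h)) ∧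
    (∀ x : ι → ℝ, Feas2 H M n x →
      ((∀ y, Feas2 H M n y → obj H A x ≤ obj H A y) ↔
        ∃ U : Finset ι, U ⊆ H ∧
          (∀ h ∈ U, x h = M h) ∧
          (∀ h ∈ H \ U, x h = A h * sU H A M n U) ∧
          ((U ⊂ H ∧ ∀ h, h ∈ U ↔ h ∈ H ∧ M h ≤ A h * sU H A M n U) ∨
            (U = H ∧ n = ∑ h ∈ H, M h)))) := by
  obtain ⟨U, xs, hfeas, hUH, hon, hoff, hcase⟩ := exists_good hH hA hM hn₁ hn₂
  -- gap nonnegativity helper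
  have hgap : ∀ y : ι → ℝ, Feas2 H M n y →
      0 ≤ ∑ h ∈ H, (A h)^2 * (xs h - y h)^2 / ((xs h)^2 * y h) := by
    intro y hy
    refine Finset.sum_nonneg fun h hh => div_nonneg (by positivity) ?_
    have := hfeas.1 h hh
    have := hy.1 h hh
    positivity
  have hmin : ∀ y, Feas2 H M n y → obj H A xs ≤ obj H A y := by
    intro y hy
    have := opt_of_struct hA xs hfeas U hon hoff hcase y hy
    linarith [hgap y hy]
  have huniq : ∀ y, Feas2 H M n y → obj H A y ≤ obj H A xs → ∀ h ∈ H, y h = xs h := by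
    intro y hy hle h hh
    have hkey := opt_of_struct hA xs hfeas U hon hoff hcase y hy
    have hzero : ∑ h ∈ H, (A h)^2 * (xs h - y h)^2 / ((xs h)^2 * y h) = 0 :=
      le_antisymm (by linarith) (hgap y hy)
    have hterm0 : (A h)^2 * (xs h - y h)^2 / ((xs h)^2 * y h) = 0 := by
      have := (Finset.sum_eq_zero_iff_of_nonneg (fun i hi => by
        have := hfeas.1 i hi
        have := hy.1 i hi
        positivity)).1 hzero h hh
      exact this
    have hApos := hA h hh
    have hxpos := hfeas.1 h hh
    have hypos := hy.1 h hh
    have hnum : (A h)^2 * (xs h - y h)^2 = 0 := by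
      rcases div_eq_zero_iff.1 hterm0 with h' | h'
      · exact h'
      · exact absurd h' (by positivity)
    have : (xs h - y h)^2 = 0 := by
      rcases mul_eq_zero.1 hnum with h' | h'
      · exact absurd (pow_eq_zero_iff (n := 2) (by norm_num) |>.1 h') hApos.ne'
      · exact h'
    have := pow_eq_zero_iff (n := 2) (by norm_num) |>.1 this
    linarith [sub_eq_zero.1 this]
  constructor
  · exact ⟨xs, hfeas, hmin, fun y hy hymin => huniq y hy (hymin xs hfeas)⟩
  · intro x hx
    constructor
    · intro hxmin
      have hxeq : ∀ h ∈ H, x h = xs h := huniq x hx (hxmin xs hfeas)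
      refine ⟨U, hUH, fun h hh => ?_, fun h hh => ?_, hcase⟩
      · rw [hxeq h (hUH hh)]; exact hon h hh
      · rw [hxeq h (mem_sdiff.1 hh).1]; exact hoff h hh
    · rintro ⟨V, hVH, hon', hoff', hcase'⟩ y hy
      have := opt_of_struct hA x hx V hon' hoff' hcase' y hy
      have hgap' : 0 ≤ ∑ h ∈ H, (A h)^2 * (x h - y h)^2 / ((x h)^2 * y h) := by
        refine Finset.sum_nonneg fun h hh => div_nonneg (by positivity) ?_
        have := hx.1 h hh
        have := hy.1 h hh
        positivity
      linarith
end

section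
/- (One-step monotonicity of take-max sets in the RNABOX iteration.) Let L ⊊ H with 0 < n − ∑_{h∈L} m_h ≤ ∑_{h∈H\L} M_h, let x** be the unique optimal solution of Problem 2 on the index set H\L with budget n − ∑_{h∈L} m_h, and set U = {h ∈ H\L : x**_h = M_h} and L̃ = {h ∈ H\(L∪U) : x**_h ≤ m_h}. Assume L̃ ≠ ∅ and put L' = L ∪ L̃. If 0 < n − ∑_{h∈L'} m_h ≤ ∑_{h∈H\L'} M_h and x*** is the unique optimal solution of Problem 2 on the index set H\L' with budget n − ∑_{h∈L'} m_h, with U' = {h ∈ H\L' : x***_h = M_h}, then U' ⊆ U. -/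
open Finset

set_option maxHeartbeats 1000000 in
lemma rnabox_exchange {ι : Type*} [DecidableEq ι] (J : Finset ι) (A M : ι → ℝ) (n' : ℝ)
    (x : ι → ℝ) (hA : ∀ h ∈ J, 0 < A h)
    (hxpos : ∀ h ∈ J, 0 < x h) (hxsum : ∑ h ∈ J, x h = n') (hxle : ∀ h ∈ J, x h ≤ M h)
    (hopt : ∀ y : ι → ℝ, (∀ h ∈ J, 0 < y h) → (∑ h ∈ J, y h = n') → (∀ h ∈ J, y h ≤ M h) →
      ∑ h ∈ J, (A h) ^ 2 / x h ≤ ∑ h ∈ J, (A h) ^ 2 / y h)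
    (g k : ι) (hg : g ∈ J) (hk : k ∈ J) (hgk : g ≠ k) (hgM : x g < M g) :
    A g / x g ≤ A k / x k := by
  by_contra hcon
  push_neg at hcon
  have hxg := hxpos g hg
  have hxk := hxpos k hk
  have hAg := hA g hg
  have hAk := hA k hk
  have h1 : A k * x g < A g * x k := by
    rw [div_lt_div_iff₀ hxk hxg] at hcon; linarith
  have hD : A k ^ 2 * x g ^ 2 < A g ^ 2 * x k ^ 2 := by
    nlinarith [mul_pos hAk hxg, mul_pos hAg hxk]
  set S := A k ^ 2 * x g + A g ^ 2 * x k with hSdef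
  have hSpos : 0 < S := by positivity
  set D := A g ^ 2 * x k ^ 2 - A k ^ 2 * x g ^ 2 with hDdef
  have hDpos : 0 < D := by simp [hDdef]; linarith
  set ε := min (min (M g - x g) (x k / 2)) (D / (2 * S)) with hεdef
  have hεpos : 0 < ε := by
    apply lt_min (lt_min (by linarith) (by linarith)) (by positivity)
  have hε1 : ε ≤ M g - x g := le_trans (min_le_left _ _) (min_le_left _ _)
  have hε2 : ε ≤ x k / 2 := le_trans (min_le_left _ _) (min_le_right _ _)
  have hε3 : ε ≤ D / (2 * S) := min_le_right _ _
  set y : ι → ℝ := fun h => if h = g then x g + ε else if h = k then x k - ε else x h with hy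
  have hyg : y g = x g + ε := by simp [hy]
  have hyk : y k = x k - ε := by simp [hy, hgk.symm]
  have hyother : ∀ h, h ≠ g → h ≠ k → y h = x h := by
    intro h h1 h2; simp [hy, h1, h2]
  have hypos : ∀ h ∈ J, 0 < y h := by
    intro h hh
    by_cases e1 : h = g
    · subst e1; rw [hyg]; linarith
    by_cases e2 : h = k
    · subst e2; rw [hyk]; linarith
    · rw [hyother h e1 e2]; exact hxpos h hh
  have hyle : ∀ h ∈ J, y h ≤ M h := by
    intro h hh
    by_cases e1 : h = g
    · subst e1; rw [hyg]; linarith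
    by_cases e2 : h = k
    · subst e2; rw [hyk]; have := hxle _ hk; linarith
    · rw [hyother h e1 e2]; exact hxle h hh
  have hsub : ({g, k} : Finset ι) ⊆ J := by
    intro h hh; simp at hh; rcases hh with rfl | rfl <;> assumption
  have hysum : ∑ h ∈ J, y h = n' := by
    have : ∑ h ∈ J, (y h - x h) = 0 := by
      rw [← Finset.sum_subset hsub (fun h hJ hn => by
        simp at hn; rw [hyother h hn.1 hn.2]; ring)]
      rw [Finset.sum_pair hgk, hyg, hyk]; ring
    rw [Finset.sum_sub_distrib] at this
    linarith [hxsum]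
  have hle := hopt y hypos hysum hyle
  have hdiff : ∑ h ∈ J, ((A h) ^ 2 / y h - (A h) ^ 2 / x h)
      = ((A g) ^ 2 / y g - (A g) ^ 2 / x g) + ((A k) ^ 2 / y k - (A k) ^ 2 / x k) := by
    rw [← Finset.sum_subset hsub (fun h hJ hn => by
      simp at hn; rw [hyother h hn.1 hn.2]; ring)]
    rw [Finset.sum_pair hgk]
  have hnn : 0 ≤ ((A g) ^ 2 / y g - (A g) ^ 2 / x g) + ((A k) ^ 2 / y k - (A k) ^ 2 / x k) := by
    rw [← hdiff, Finset.sum_sub_distrib]; linarith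
  rw [hyg, hyk] at hnn
  have hP : (0:ℝ) < (x g + ε) * x g := by positivity
  have hQ : (0:ℝ) < (x k - ε) * x k := by
    have : 0 < x k - ε := by linarith
    positivity
  have e1 : (A g) ^ 2 / (x g + ε) - (A g) ^ 2 / x g = -(ε * A g ^ 2) / ((x g + ε) * x g) := by
    field_simp; ring
  have e2 : (A k) ^ 2 / (x k - ε) - (A k) ^ 2 / x k = (ε * A k ^ 2) / ((x k - ε) * x k) := by
    rw [div_sub_div _ _ (by linarith : x k - ε ≠ 0) (ne_of_gt hxk)]
    ring_nf
  have hfrac : ε * A g ^ 2 / ((x g + ε) * x g) ≤ ε * A k ^ 2 / ((x k - ε) * x k) := by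
    rw [e1, e2] at hnn
    have := neg_div (((x g + ε)) * x g) (ε * A g ^ 2)
    linarith [hnn]
  rw [div_le_div_iff₀ hP hQ] at hfrac
  -- hfrac : ε * A g ^ 2 * ((x k - ε) * x k) ≤ ε * A k ^ 2 * ((x g + ε) * x g)
  have hcancel : A g ^ 2 * ((x k - ε) * x k) ≤ A k ^ 2 * ((x g + ε) * x g) := by
    have := (mul_le_mul_iff_right₀ hεpos).mp (by linarith [hfrac] : ε * (A g ^ 2 * ((x k - ε) * x k)) ≤ ε * (A k ^ 2 * ((x g + ε) * x g)))
    exact this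
  have hεS : ε * S ≤ D / 2 := by
    calc ε * S ≤ (D / (2 * S)) * S := by exact mul_le_mul_of_nonneg_right hε3 hSpos.le
    _ = D / 2 := by field_simp
  have hDS : D ≤ ε * S := by simp only [hDdef, hSdef]; nlinarith [hcancel]
  linarith [hεS, hDpos, hDS]

/-- One-step monotonicity of the take-max sets in the RNABOX iteration: the take-max set
`U'` of the next interim one-sided problem is contained in the current take-max set `U`. -/
theorem rnabox_takemax_monotone {ι : Type*} [DecidableEq ι] (H : Finset ι) (hH : H.Nonempty)
    (A m M : ι → ℝ) (n : ℝ)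
    (hA : ∀ h ∈ H, 0 < A h) (hm : ∀ h ∈ H, 0 < m h) (hmM : ∀ h ∈ H, m h < M h)
    (hn₁ : ∑ h ∈ H, m h ≤ n) (hn₂ : n ≤ ∑ h ∈ H, M h)
    (L : Finset ι) (hLH : L ⊂ H)
    (hb₁ : 0 < n - ∑ h ∈ L, m h) (hb₂ : n - ∑ h ∈ L, m h ≤ ∑ h ∈ H \ L, M h)
    -- `x₂` is the (unique) optimal solution of Problem 2 on `H \ L` with budget `n − ∑_L m`:
    (x₂ : ι → ℝ)
    (hx₂pos : ∀ h ∈ H \ L, 0 < x₂ h)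
    (hx₂sum : ∑ h ∈ H \ L, x₂ h = n - ∑ h ∈ L, m h)
    (hx₂le : ∀ h ∈ H \ L, x₂ h ≤ M h)
    (hx₂opt : ∀ y : ι → ℝ, (∀ h ∈ H \ L, 0 < y h) →
      (∑ h ∈ H \ L, y h = n - ∑ h ∈ L, m h) → (∀ h ∈ H \ L, y h ≤ M h) →
      ∑ h ∈ H \ L, (A h) ^ 2 / x₂ h ≤ ∑ h ∈ H \ L, (A h) ^ 2 / y h)
    (U Lt : Finset ι)
    (hU : ∀ h, h ∈ U ↔ h ∈ H \ L ∧ x₂ h = M h)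
    (hLt : ∀ h, h ∈ Lt ↔ h ∈ H \ (L ∪ U) ∧ x₂ h ≤ m h)
    (hLtne : Lt.Nonempty)
    (L' : Finset ι) (hL' : L' = L ∪ Lt)
    (hb₁' : 0 < n - ∑ h ∈ L', m h) (hb₂' : n - ∑ h ∈ L', m h ≤ ∑ h ∈ H \ L', M h)
    -- `x₃` is the (unique) optimal solution of Problem 2 on `H \ L'` with budget `n − ∑_{L'} m`:
    (x₃ : ι → ℝ)
    (hx₃pos : ∀ h ∈ H \ L', 0 < x₃ h)
    (hx₃sum : ∑ h ∈ H \ L', x₃ h = n - ∑ h ∈ L', m h)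
    (hx₃le : ∀ h ∈ H \ L', x₃ h ≤ M h)
    (hx₃opt : ∀ y : ι → ℝ, (∀ h ∈ H \ L', 0 < y h) →
      (∑ h ∈ H \ L', y h = n - ∑ h ∈ L', m h) → (∀ h ∈ H \ L', y h ≤ M h) →
      ∑ h ∈ H \ L', (A h) ^ 2 / x₃ h ≤ ∑ h ∈ H \ L', (A h) ^ 2 / y h)
    (U' : Finset ι)
    (hU' : ∀ h, h ∈ U' ↔ h ∈ H \ L' ∧ x₃ h = M h) :
    U' ⊆ U := by
  -- basic set facts
  have hLtsub : Lt ⊆ H \ L := by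
    intro h hh
    have := (hLt h).mp hh
    rw [Finset.mem_sdiff] at this ⊢
    rw [Finset.mem_union] at this
    exact ⟨(this.1).1, fun c => (this.1).2 (Or.inl c)⟩
  have hdisj : Disjoint L Lt := by
    rw [Finset.disjoint_right]
    intro h hh
    have := hLtsub hh
    rw [Finset.mem_sdiff] at this
    exact this.2
  have hsdiff : H \ L' = (H \ L) \ Lt := by
    subst hL'; ext h; simp; tauto
  have hsubL' : H \ L' ⊆ H \ L := by
    rw [hsdiff]; exact Finset.sdiff_subset
  have hAsub : ∀ h ∈ H \ L, 0 < A h := fun h hh => hA h (Finset.mem_sdiff.mp hh).1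
  have hAsub' : ∀ h ∈ H \ L', 0 < A h := fun h hh => hAsub h (hsubL' hh)
  -- budget comparison: ∑_{H\L'} x₃ ≤ ∑_{H\L'} x₂
  have hsumL' : ∑ h ∈ L', m h = ∑ h ∈ L, m h + ∑ h ∈ Lt, m h := by
    subst hL'; exact Finset.sum_union hdisj
  have hLtle : ∑ h ∈ Lt, x₂ h ≤ ∑ h ∈ Lt, m h :=
    Finset.sum_le_sum (fun h hh => ((hLt h).mp hh).2)
  have hsplit : ∑ h ∈ H \ L', x₂ h + ∑ h ∈ Lt, x₂ h = ∑ h ∈ H \ L, x₂ h := by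
    rw [hsdiff]; exact Finset.sum_sdiff hLtsub
  have hbudget : ∑ h ∈ H \ L', x₃ h ≤ ∑ h ∈ H \ L', x₂ h := by
    rw [hx₃sum]; linarith [hx₂sum, hsumL', hLtle, hsplit]
  -- main argument
  intro h₀ hh₀
  obtain ⟨hh₀mem, hh₀M⟩ := (hU' h₀).mp hh₀
  by_contra hnotU
  have hx₂lt : x₂ h₀ < M h₀ := by
    have hmem2 : h₀ ∈ H \ L := hsubL' hh₀mem
    rcases lt_or_eq_of_le (hx₂le h₀ hmem2) with h | h
    · exact h
    · exact absurd ((hU h₀).mpr ⟨hmem2, h⟩) hnotU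
  have hx₂lt3 : x₂ h₀ < x₃ h₀ := by rw [hh₀M]; exact hx₂lt
  -- find k with x₃ k < x₂ k
  have hex : ∃ k ∈ H \ L', x₃ k < x₂ k := by
    by_contra hc
    push_neg at hc
    have : ∑ h ∈ H \ L', x₂ h < ∑ h ∈ H \ L', x₃ h :=
      Finset.sum_lt_sum (fun i hi => hc i hi) ⟨h₀, hh₀mem, hx₂lt3⟩
    linarith
  obtain ⟨k, hkmem, hk3⟩ := hex
  have hkmem2 : k ∈ H \ L := hsubL' hkmem
  have hkne : k ≠ h₀ := by
    intro e; subst e; linarith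
  -- ratio inequalities from optimality
  have r2 : A h₀ / x₂ h₀ ≤ A k / x₂ k :=
    rnabox_exchange (H \ L) A M _ x₂ hAsub hx₂pos hx₂sum hx₂le hx₂opt h₀ k
      (hsubL' hh₀mem) hkmem2 hkne.symm hx₂lt
  have hx₃kM : x₃ k < M k := lt_of_lt_of_le hk3 (hx₂le k hkmem2)
  have r3 : A k / x₃ k ≤ A h₀ / x₃ h₀ :=
    rnabox_exchange (H \ L') A M _ x₃ hAsub' hx₃pos hx₃sum hx₃le hx₃opt k h₀
      hkmem hh₀mem hkne hx₃kM
  have hAk := hAsub' k hkmem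
  have hAh₀ := hAsub' h₀ hh₀mem
  have s1 : A k / x₂ k < A k / x₃ k :=
    div_lt_div_of_pos_left hAk (hx₃pos k hkmem) hk3
  have s2 : A h₀ / x₃ h₀ < A h₀ / x₂ h₀ :=
    div_lt_div_of_pos_left hAh₀ (hx₂pos h₀ (hsubL' hh₀mem)) hx₂lt3
  linarith
end

section
/- (One-step monotonicity of the values s(L,U) in the RNABOX iteration.) Let L ⊊ H with 0 < n − ∑_{h∈L} m_h ≤ ∑_{h∈H\L} M_h, let x** be the unique optimal solution of Problem 2 on the index set H\L with budget n − ∑_{h∈L} m_h, and set U = {h ∈ H\L : x**_h = M_h} and L̃ = {h ∈ H\(L∪U) : x**_h ≤ m_h}. Assume L̃ ≠ ∅ and put L' = L ∪ L̃. Suppose 0 < n − ∑_{h∈L'} m_h ≤ ∑_{h∈H\L'} M_h, let x*** be the unique optimal solution of Problem 2 on the index set H\L' with budget n − ∑_{h∈L'} m_h, and set U' = {h ∈ H\L' : x***_h = M_h}. If L' ∪ U' ⊊ H, then s(L,U) ≥ s(L',U'). -/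
open Finset

section RnaboxAux

open Filter

variable {ι : Type*} [DecidableEq ι]

private lemma rnabox_exchange_ineq (S : Finset ι) (A M x : ι → ℝ) (b : ℝ)
    (hpos : ∀ h ∈ S, 0 < x h)
    (hsum : ∑ h ∈ S, x h = b)
    (hle : ∀ h ∈ S, x h ≤ M h)
    (hopt : ∀ y : ι → ℝ, (∀ h ∈ S, 0 < y h) → (∑ h ∈ S, y h = b) → (∀ h ∈ S, y h ≤ M h) →
      ∑ h ∈ S, (A h) ^ 2 / x h ≤ ∑ h ∈ S, (A h) ^ 2 / y h)
    (g h : ι) (hgS : g ∈ S) (hhS : h ∈ S) (hgh : g ≠ h) (hg : x g < M g) :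
    A g ^ 2 / (x g) ^ 2 ≤ A h ^ 2 / (x h) ^ 2 := by
  have hxg := hpos g hgS
  have hxh := hpos h hhS
  set δ : ℝ := min (M g - x g) (x h) with hδdef
  have hδ : 0 < δ := lt_min (by linarith) hxh
  have hsub : ({g, h} : Finset ι) ⊆ S := by
    intro i hi
    simp only [Finset.mem_insert, Finset.mem_singleton] at hi
    rcases hi with rfl | rfl <;> assumption
  have claim : ∀ ε ∈ Set.Ioo (0:ℝ) δ,
      A g ^ 2 / (x g * (x g + ε)) ≤ A h ^ 2 / (x h * (x h - ε)) := by
    rintro ε ⟨hε0, hεδ⟩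
    have hεM : ε ≤ M g - x g := (lt_of_lt_of_le hεδ (min_le_left _ _)).le
    have hεx : ε < x h := lt_of_lt_of_le hεδ (min_le_right _ _)
    set y : ι → ℝ := fun i => if i = g then x g + ε else if i = h then x h - ε else x i with hy
    have hyg : y g = x g + ε := by simp [hy]
    have hyh : y h = x h - ε := by
      simp only [hy]
      rw [if_neg (Ne.symm hgh)]
      simp
    have hyo : ∀ i, i ≠ g → i ≠ h → y i = x i := by
      intro i h1 h2; simp [hy, h1, h2]
    have hypos : ∀ i ∈ S, 0 < y i := by
      intro i hi
      by_cases h1 : i = g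
      · subst h1; rw [hyg]; linarith
      by_cases h2 : i = h
      · subst h2; rw [hyh]; linarith
      · rw [hyo i h1 h2]; exact hpos i hi
    have hyle : ∀ i ∈ S, y i ≤ M i := by
      intro i hi
      by_cases h1 : i = g
      · subst h1; rw [hyg]; linarith
      by_cases h2 : i = h
      · subst h2; rw [hyh]; linarith [hle i hhS]
      · rw [hyo i h1 h2]; exact hle i hi
    have hside : ∀ i ∈ S, i ∉ ({g, h} : Finset ι) → y i - x i = 0 := by
      intro i hi hni
      simp only [Finset.mem_insert, Finset.mem_singleton, not_or] at hni
      rw [hyo i hni.1 hni.2]; ring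
    have hdiff0 : ∑ i ∈ S, (y i - x i) = 0 := by
      rw [← Finset.sum_subset hsub hside]
      rw [Finset.sum_pair hgh, hyg, hyh]; ring
    have hysum : ∑ i ∈ S, y i = b := by
      have := Finset.sum_sub_distrib (s := S) (f := y) (g := x)
      rw [this, hsum] at hdiff0
      linarith
    have hle2 := hopt y hypos hysum hyle
    have hdiff : ∑ i ∈ S, ((A i)^2 / y i - (A i)^2 / x i) ≥ 0 := by
      have := Finset.sum_sub_distrib (s := S) (f := fun i => (A i)^2 / y i)
        (g := fun i => (A i)^2 / x i)
      rw [this]; linarith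
    have hexp : ∑ i ∈ S, ((A i)^2 / y i - (A i)^2 / x i)
        = ((A g)^2 / (x g + ε) - (A g)^2 / x g) + ((A h)^2 / (x h - ε) - (A h)^2 / x h) := by
      have hside2 : ∀ i ∈ S, i ∉ ({g, h} : Finset ι) →
          (A i)^2 / y i - (A i)^2 / x i = 0 := by
        intro i hi hni
        simp only [Finset.mem_insert, Finset.mem_singleton, not_or] at hni
        rw [hyo i hni.1 hni.2]; ring
      rw [← Finset.sum_subset hsub hside2]
      rw [Finset.sum_pair hgh, hyg, hyh]
    have e1 : (A g)^2 / (x g + ε) - (A g)^2 / x g = -(ε * ((A g)^2 / (x g * (x g + ε)))) := by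
      field_simp; ring
    have hne : x h - ε ≠ 0 := by linarith
    have e2 : (A h)^2 / (x h - ε) - (A h)^2 / x h = ε * ((A h)^2 / (x h * (x h - ε))) := by
      field_simp
      ring
    rw [hexp, e1, e2] at hdiff
    have : ε * ((A g)^2 / (x g * (x g + ε))) ≤ ε * ((A h)^2 / (x h * (x h - ε))) := by linarith
    exact le_of_mul_le_mul_left this hε0
  have tg : Tendsto (fun ε : ℝ => A g ^ 2 / (x g * (x g + ε))) (nhdsWithin 0 (Set.Ioi 0))
      (nhds (A g ^ 2 / (x g * x g))) := by
    apply Tendsto.mono_left _ nhdsWithin_le_nhds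
    have hc : ContinuousAt (fun ε : ℝ => A g ^ 2 / (x g * (x g + ε))) 0 := by
      apply ContinuousAt.div continuousAt_const
      · exact continuousAt_const.mul (continuousAt_const.add continuousAt_id)
      · simpa using (mul_pos hxg hxg).ne'
    simpa using hc.tendsto
  have th : Tendsto (fun ε : ℝ => A h ^ 2 / (x h * (x h - ε))) (nhdsWithin 0 (Set.Ioi 0))
      (nhds (A h ^ 2 / (x h * x h))) := by
    apply Tendsto.mono_left _ nhdsWithin_le_nhds
    have hc : ContinuousAt (fun ε : ℝ => A h ^ 2 / (x h * (x h - ε))) 0 := by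
      apply ContinuousAt.div continuousAt_const
      · exact continuousAt_const.mul (continuousAt_const.sub continuousAt_id)
      · simpa using (mul_pos hxh hxh).ne'
    simpa using hc.tendsto
  have hev : (fun ε : ℝ => A g ^ 2 / (x g * (x g + ε))) ≤ᶠ[nhdsWithin 0 (Set.Ioi 0)]
      (fun ε : ℝ => A h ^ 2 / (x h * (x h - ε))) := by
    filter_upwards [Ioo_mem_nhdsGT_of_mem ⟨le_refl (0:ℝ), hδ⟩] with ε hε
    exact claim ε hε
  have := le_of_tendsto_of_tendsto tg th hev
  rw [← sq (x g), ← sq (x h)] at this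
  exact this

private lemma rnabox_opt_min (S : Finset ι) (A M x : ι → ℝ) (b : ℝ)
    (hA : ∀ h ∈ S, 0 < A h)
    (hpos : ∀ h ∈ S, 0 < x h)
    (hsum : ∑ h ∈ S, x h = b)
    (hle : ∀ h ∈ S, x h ≤ M h)
    (hopt : ∀ y : ι → ℝ, (∀ h ∈ S, 0 < y h) → (∑ h ∈ S, y h = b) → (∀ h ∈ S, y h ≤ M h) →
      ∑ h ∈ S, (A h) ^ 2 / x h ≤ ∑ h ∈ S, (A h) ^ 2 / y h)
    (g₀ : ι) (hg₀S : g₀ ∈ S) (hg₀ : x g₀ < M g₀) :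
    ∀ h ∈ S, x h = min (M h) (x g₀ / A g₀ * A h) := by
  have hA₀ := hA g₀ hg₀S
  have hx₀ := hpos g₀ hg₀S
  intro h hh
  have hAh := hA h hh
  have hxh := hpos h hh
  by_cases hhg : h = g₀
  · subst hhg
    rw [div_mul_cancel₀ _ (ne_of_gt hA₀)]
    exact (min_eq_right (hle h hh)).symm
  · have e1 := rnabox_exchange_ineq S A M x b hpos hsum hle hopt g₀ h hg₀S hh (Ne.symm hhg) hg₀
    by_cases hsat : x h = M h
    · have h1 : A g₀ * x h ≤ A h * x g₀ := by
        rw [div_le_div_iff₀ (by positivity) (by positivity)] at e1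
        nlinarith [mul_pos hA₀ hxh, mul_pos hAh hx₀]
      have h2 : M h ≤ x g₀ / A g₀ * A h := by
        rw [← hsat]
        rw [div_mul_eq_mul_div, le_div_iff₀ hA₀]
        nlinarith
      rw [hsat]
      exact (min_eq_left h2).symm
    · have hlt : x h < M h := lt_of_le_of_ne (hle h hh) hsat
      have e2 := rnabox_exchange_ineq S A M x b hpos hsum hle hopt h g₀ hh hg₀S hhg hlt
      have heq : A g₀ ^ 2 / (x g₀) ^ 2 = A h ^ 2 / (x h) ^ 2 := le_antisymm e1 e2
      have h2 : A g₀ * x h = A h * x g₀ := by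
        rw [div_eq_div_iff (by positivity) (by positivity)] at heq
        nlinarith [mul_pos hA₀ hxh, mul_pos hAh hx₀]
      have hxeq : x h = x g₀ / A g₀ * A h := by
        field_simp
        linarith [h2]
      rw [← hxeq]
      exact (min_eq_right (hle h hh)).symm

private lemma rnabox_sval (H : Finset ι) (A m M : ι → ℝ) (n : ℝ) (L U : Finset ι)
    (x : ι → ℝ) (t : ℝ)
    (hA : ∀ h ∈ H, 0 < A h)
    (hsum : ∑ h ∈ H \ L, x h = n - ∑ h ∈ L, m h)
    (hU : ∀ h, h ∈ U ↔ h ∈ H \ L ∧ x h = M h)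
    (hmin : ∀ h ∈ H \ L, x h = min (M h) (t * A h))
    (hne : (H \ (L ∪ U)).Nonempty) :
    sLU H A m M n L U = t := by
  have hHLU : H \ (L ∪ U) = (H \ L) \ U := by
    ext i
    simp only [Finset.mem_sdiff, Finset.mem_union, not_or]
    tauto
  have hUsub : U ⊆ H \ L := fun i hi => ((hU i).mp hi).1
  have hsplit := Finset.sum_sdiff (f := x) hUsub
  have hUx : ∑ i ∈ U, x i = ∑ i ∈ U, M i :=
    Finset.sum_congr rfl (fun i hi => ((hU i).mp hi).2)
  have hfree : ∀ i ∈ (H \ L) \ U, x i = t * A i := by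
    intro i hi
    have hi1 : i ∈ H \ L := (Finset.mem_sdiff.mp hi).1
    have hi2 : i ∉ U := (Finset.mem_sdiff.mp hi).2
    have hmem := hmin i hi1
    rcases min_cases (M i) (t * A i) with ⟨he, _⟩ | ⟨he, _⟩
    · exfalso
      exact hi2 ((hU i).mpr ⟨hi1, by rw [hmem, he]⟩)
    · rw [hmem, he]
  have hfreesum : ∑ i ∈ (H \ L) \ U, x i = t * ∑ i ∈ (H \ L) \ U, A i := by
    rw [Finset.mul_sum]
    exact Finset.sum_congr rfl hfree
  have hApos : 0 < ∑ i ∈ H \ (L ∪ U), A i := by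
    apply Finset.sum_pos
    · intro i hi
      exact hA i (Finset.mem_sdiff.mp hi).1
    · exact hne
  have hnum : n - ∑ h ∈ L, m h - ∑ h ∈ U, M h = t * ∑ i ∈ H \ (L ∪ U), A i := by
    rw [hHLU]
    rw [hHLU] at *
    have : ∑ i ∈ (H \ L) \ U, x i + ∑ i ∈ U, x i = n - ∑ h ∈ L, m h := by
      rw [hsplit]; exact hsum
    rw [hUx, hfreesum] at this
    linarith
  rw [sLU, hnum]
  exact mul_div_cancel_right₀ t (ne_of_gt hApos)

end RnaboxAux

/-- One-step monotonicity of the values `s(L,U)` in the RNABOX iteration: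
if `L' ∪ U' ⊊ H` then `s(L,U) ≥ s(L',U')`. -/
theorem rnabox_s_monotone {ι : Type*} [DecidableEq ι] (H : Finset ι) (hH : H.Nonempty)
    (A m M : ι → ℝ) (n : ℝ)
    (hA : ∀ h ∈ H, 0 < A h) (hm : ∀ h ∈ H, 0 < m h) (hmM : ∀ h ∈ H, m h < M h)
    (hn₁ : ∑ h ∈ H, m h ≤ n) (hn₂ : n ≤ ∑ h ∈ H, M h)
    (L : Finset ι) (hLH : L ⊂ H)
    (hb₁ : 0 < n - ∑ h ∈ L, m h) (hb₂ : n - ∑ h ∈ L, m h ≤ ∑ h ∈ H \ L, M h)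
    -- `x₂` is the (unique) optimal solution of Problem 2 on `H \ L` with budget `n − ∑_L m`:
    (x₂ : ι → ℝ)
    (hx₂pos : ∀ h ∈ H \ L, 0 < x₂ h)
    (hx₂sum : ∑ h ∈ H \ L, x₂ h = n - ∑ h ∈ L, m h)
    (hx₂le : ∀ h ∈ H \ L, x₂ h ≤ M h)
    (hx₂opt : ∀ y : ι → ℝ, (∀ h ∈ H \ L, 0 < y h) →
      (∑ h ∈ H \ L, y h = n - ∑ h ∈ L, m h) → (∀ h ∈ H \ L, y h ≤ M h) →
      ∑ h ∈ H \ L, (A h) ^ 2 / x₂ h ≤ ∑ h ∈ H \ L, (A h) ^ 2 / y h)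
    (U Lt : Finset ι)
    (hU : ∀ h, h ∈ U ↔ h ∈ H \ L ∧ x₂ h = M h)
    (hLt : ∀ h, h ∈ Lt ↔ h ∈ H \ (L ∪ U) ∧ x₂ h ≤ m h)
    (hLtne : Lt.Nonempty)
    (L' : Finset ι) (hL' : L' = L ∪ Lt)
    (hb₁' : 0 < n - ∑ h ∈ L', m h) (hb₂' : n - ∑ h ∈ L', m h ≤ ∑ h ∈ H \ L', M h)
    -- `x₃` is the (unique) optimal solution of Problem 2 on `H \ L'` with budget `n − ∑_{L'} m`:
    (x₃ : ι → ℝ)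
    (hx₃pos : ∀ h ∈ H \ L', 0 < x₃ h)
    (hx₃sum : ∑ h ∈ H \ L', x₃ h = n - ∑ h ∈ L', m h)
    (hx₃le : ∀ h ∈ H \ L', x₃ h ≤ M h)
    (hx₃opt : ∀ y : ι → ℝ, (∀ h ∈ H \ L', 0 < y h) →
      (∑ h ∈ H \ L', y h = n - ∑ h ∈ L', m h) → (∀ h ∈ H \ L', y h ≤ M h) →
      ∑ h ∈ H \ L', (A h) ^ 2 / x₃ h ≤ ∑ h ∈ H \ L', (A h) ^ 2 / y h)
    (U' : Finset ι)
    (hU' : ∀ h, h ∈ U' ↔ h ∈ H \ L' ∧ x₃ h = M h)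
    (hproper' : L' ∪ U' ⊂ H) :
    sLU H A m M n L U ≥ sLU H A m M n L' U' := by
  -- a non-saturated element for x₂
  obtain ⟨h₀, hh₀⟩ := hLtne
  obtain ⟨hh₀LU, hh₀m⟩ := (hLt h₀).mp hh₀
  have hh₀H : h₀ ∈ H := (Finset.mem_sdiff.mp hh₀LU).1
  have hh₀nLU : h₀ ∉ L ∪ U := (Finset.mem_sdiff.mp hh₀LU).2
  have hh₀S : h₀ ∈ H \ L := by
    rw [Finset.mem_sdiff]
    exact ⟨hh₀H, fun hc => hh₀nLU (Finset.mem_union_left _ hc)⟩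
  have hh₀lt : x₂ h₀ < M h₀ := lt_of_le_of_lt hh₀m (hmM h₀ hh₀H)
  set t : ℝ := x₂ h₀ / A h₀ with htdef
  have hASpos : ∀ h ∈ H \ L, 0 < A h := fun h hh => hA h (Finset.mem_sdiff.mp hh).1
  have hx₂min : ∀ h ∈ H \ L, x₂ h = min (M h) (t * A h) :=
    rnabox_opt_min (H \ L) A M x₂ _ hASpos hx₂pos hx₂sum hx₂le hx₂opt h₀ hh₀S hh₀lt
  -- a non-saturated element for x₃
  obtain ⟨g₀, hg₀H, hg₀n⟩ := Finset.exists_of_ssubset hproper'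
  have hg₀nL' : g₀ ∉ L' := fun hc => hg₀n (Finset.mem_union_left _ hc)
  have hg₀nU' : g₀ ∉ U' := fun hc => hg₀n (Finset.mem_union_right _ hc)
  have hg₀S' : g₀ ∈ H \ L' := Finset.mem_sdiff.mpr ⟨hg₀H, hg₀nL'⟩
  have hg₀lt : x₃ g₀ < M g₀ := by
    refine lt_of_le_of_ne (hx₃le g₀ hg₀S') (fun hc => hg₀nU' ?_)
    exact (hU' g₀).mpr ⟨hg₀S', hc⟩
  set t' : ℝ := x₃ g₀ / A g₀ with ht'def
  have hAS'pos : ∀ h ∈ H \ L', 0 < A h := fun h hh => hA h (Finset.mem_sdiff.mp hh).1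
  have hx₃min : ∀ h ∈ H \ L', x₃ h = min (M h) (t' * A h) :=
    rnabox_opt_min (H \ L') A M x₃ _ hAS'pos hx₃pos hx₃sum hx₃le hx₃opt g₀ hg₀S' hg₀lt
  -- s-values equal t and t'
  have hs1 : sLU H A m M n L U = t :=
    rnabox_sval H A m M n L U x₂ t hA hx₂sum hU hx₂min ⟨h₀, hh₀LU⟩
  have hs2 : sLU H A m M n L' U' = t' := by
    apply rnabox_sval H A m M n L' U' x₃ t' hA hx₃sum hU' hx₃min
    exact ⟨g₀, Finset.mem_sdiff.mpr ⟨hg₀H, hg₀n⟩⟩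
  -- set identities
  have hLtsub : Lt ⊆ H \ L := by
    intro i hi
    have hi1 := ((hLt i).mp hi).1
    rw [Finset.mem_sdiff] at hi1 ⊢
    exact ⟨hi1.1, fun hc => hi1.2 (Finset.mem_union_left _ hc)⟩
  have hHL' : H \ L' = (H \ L) \ Lt := by
    rw [hL']
    ext i
    simp only [Finset.mem_sdiff, Finset.mem_union, not_or]
    tauto
  have hdisj : Disjoint L Lt := by
    rw [Finset.disjoint_right]
    intro i hi
    have hi1 := ((hLt i).mp hi).1
    rw [Finset.mem_sdiff, Finset.mem_union, not_or] at hi1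
    exact hi1.2.1
  have hsumL' : ∑ h ∈ L', m h = ∑ h ∈ L, m h + ∑ h ∈ Lt, m h := by
    rw [hL', Finset.sum_union hdisj]
  -- main comparison: t' ≤ t
  have hmain : t' ≤ t := by
    by_contra hcon
    push_neg at hcon
    have hsubL' : H \ L' ⊆ H \ L := by
      rw [hHL']; exact Finset.sdiff_subset
    have hkey : ∑ h ∈ H \ L', x₂ h < ∑ h ∈ H \ L', x₃ h := by
      apply Finset.sum_lt_sum
      · intro i hi
        rw [hx₂min i (hsubL' hi), hx₃min i hi]
        exact min_le_min le_rfl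
          (mul_le_mul_of_nonneg_right hcon.le (hA i (Finset.mem_sdiff.mp hi).1).le)
      · refine ⟨g₀, hg₀S', ?_⟩
        rw [hx₂min g₀ (hsubL' hg₀S')]
        have hx₃eq : x₃ g₀ = t' * A g₀ := by
          rw [ht'def]
          exact (div_mul_cancel₀ _ (ne_of_gt (hA g₀ hg₀H))).symm
        calc min (M g₀) (t * A g₀) ≤ t * A g₀ := min_le_right _ _
          _ < t' * A g₀ := by
              exact mul_lt_mul_of_pos_right hcon (hA g₀ hg₀H)
          _ = x₃ g₀ := hx₃eq.symm
    have hsplit : ∑ h ∈ (H \ L) \ Lt, x₂ h + ∑ h ∈ Lt, x₂ h = ∑ h ∈ H \ L, x₂ h :=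
      Finset.sum_sdiff hLtsub
    have hLtle : ∑ h ∈ Lt, x₂ h ≤ ∑ h ∈ Lt, m h :=
      Finset.sum_le_sum (fun i hi => ((hLt i).mp hi).2)
    rw [hx₃sum] at hkey
    rw [hHL'] at hkey
    rw [hx₂sum] at hsplit
    linarith
  rw [hs1, hs2]
  exact hmain
end

section
/- (Correctness of the RNABOX algorithm.) Define recursively L_1 = ∅ and, for r ≥ 1 with L_r ⊊ H: the Problem 2 on index set H\L_r with budget n − ∑_{h∈L_r} m_h is feasible (its budget is positive and at most ∑_{h∈H\L_r} M_h); let x^{(r)} be its unique optimal solution, U_r = {h ∈ H\L_r : x^{(r)}_h = M_h}, L̃_r = {h ∈ H\(L_r ∪ U_r) : x^{(r)}_h ≤ m_h}, and L_{r+1} = L_r ∪ L̃_r. Then the recursion is well defined (each interim Problem 2 is feasible), there exists an iteration r* ≤ |H| + 1 with L̃_{r*} = ∅, and the vector x* defined by x*_h = m_h for h ∈ L_{r*} and x*_h = x^{(r*)}_h for h ∈ H\L_{r*} is the unique optimal solution of Problem 1. -/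
open Finset

lemma pt_ineq (a x y lam : ℝ) (hx : 0 < x) (hy : 0 < y)
    (h : 0 ≤ (a ^ 2 - lam ^ 2 * x ^ 2) * (x - y)) :
    lam ^ 2 * (x - y) ≤ a ^ 2 / y - a ^ 2 / x := by
  have key : a ^ 2 / y - a ^ 2 / x - lam ^ 2 * (x - y)
      = a ^ 2 * (x - y) ^ 2 / (x ^ 2 * y) + (a ^ 2 - lam ^ 2 * x ^ 2) * (x - y) / x ^ 2 := by
    field_simp
    ring
  have h1 : 0 ≤ a ^ 2 * (x - y) ^ 2 / (x ^ 2 * y) := by positivity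
  have h2 : 0 ≤ (a ^ 2 - lam ^ 2 * x ^ 2) * (x - y) / x ^ 2 := by positivity
  linarith

lemma pt_strict (a x y lam : ℝ) (hx : 0 < x) (hy : 0 < y) (ha : a ≠ 0) (hne : y ≠ x)
    (h : 0 ≤ (a ^ 2 - lam ^ 2 * x ^ 2) * (x - y)) :
    lam ^ 2 * (x - y) < a ^ 2 / y - a ^ 2 / x := by
  have key : a ^ 2 / y - a ^ 2 / x - lam ^ 2 * (x - y)
      = a ^ 2 * (x - y) ^ 2 / (x ^ 2 * y) + (a ^ 2 - lam ^ 2 * x ^ 2) * (x - y) / x ^ 2 := by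
    field_simp
    ring
  have hxy : x - y ≠ 0 := sub_ne_zero.mpr (Ne.symm hne)
  have h1 : 0 < a ^ 2 * (x - y) ^ 2 / (x ^ 2 * y) := by positivity
  have h2 : 0 ≤ (a ^ 2 - lam ^ 2 * x ^ 2) * (x - y) / x ^ 2 := by positivity
  linarith

lemma kkt_le {ι : Type*} (S : Finset ι) (A x y : ι → ℝ) (lam : ℝ)
    (hx : ∀ h ∈ S, 0 < x h) (hy : ∀ h ∈ S, 0 < y h)
    (hsum : ∑ h ∈ S, x h = ∑ h ∈ S, y h)
    (hlag : ∀ h ∈ S, 0 ≤ ((A h) ^ 2 - lam ^ 2 * (x h) ^ 2) * (x h - y h)) :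
    ∑ h ∈ S, (A h) ^ 2 / x h ≤ ∑ h ∈ S, (A h) ^ 2 / y h := by
  have h1 : ∑ h ∈ S, lam ^ 2 * (x h - y h) ≤ ∑ h ∈ S, ((A h) ^ 2 / y h - (A h) ^ 2 / x h) :=
    Finset.sum_le_sum fun h hh => pt_ineq _ _ _ _ (hx h hh) (hy h hh) (hlag h hh)
  have h2 : ∑ h ∈ S, lam ^ 2 * (x h - y h) = 0 := by
    rw [← Finset.mul_sum, Finset.sum_sub_distrib, hsum]
    ring
  rw [Finset.sum_sub_distrib] at h1
  linarith

lemma kkt_eq {ι : Type*} (S : Finset ι) (A x y : ι → ℝ) (lam : ℝ)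
    (hx : ∀ h ∈ S, 0 < x h) (hy : ∀ h ∈ S, 0 < y h)
    (hsum : ∑ h ∈ S, x h = ∑ h ∈ S, y h)
    (hlag : ∀ h ∈ S, 0 ≤ ((A h) ^ 2 - lam ^ 2 * (x h) ^ 2) * (x h - y h))
    (hA : ∀ h ∈ S, A h ≠ 0)
    (hobj : ∑ h ∈ S, (A h) ^ 2 / y h ≤ ∑ h ∈ S, (A h) ^ 2 / x h) :
    ∀ h ∈ S, y h = x h := by
  by_contra hcon
  push_neg at hcon
  obtain ⟨h₀, hh₀, hne⟩ := hcon
  have h1 : ∑ h ∈ S, lam ^ 2 * (x h - y h) < ∑ h ∈ S, ((A h) ^ 2 / y h - (A h) ^ 2 / x h) := by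
    refine Finset.sum_lt_sum (fun h hh => pt_ineq _ _ _ _ (hx h hh) (hy h hh) (hlag h hh))
      ⟨h₀, hh₀, pt_strict _ _ _ _ (hx h₀ hh₀) (hy h₀ hh₀) (hA h₀ hh₀) hne (hlag h₀ hh₀)⟩
  have h2 : ∑ h ∈ S, lam ^ 2 * (x h - y h) = 0 := by
    rw [← Finset.mul_sum, Finset.sum_sub_distrib, hsum]
    ring
  rw [Finset.sum_sub_distrib] at h1
  linarith

lemma exists_lam {ι : Type*} (J : Finset ι) (A M : ι → ℝ) (b lam₀ : ℝ) (hl : 0 < lam₀)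
    (hb : 0 < b) (hub : b ≤ ∑ h ∈ J, min (M h) (A h / lam₀))
    (hA : ∀ h ∈ J, 0 < A h) :
    ∃ lam, lam₀ ≤ lam ∧ 0 < lam ∧ ∑ h ∈ J, min (M h) (A h / lam) = b := by
  set Λ : ℝ := max lam₀ ((∑ h ∈ J, A h) / b) with hΛdef
  have hΛl : lam₀ ≤ Λ := le_max_left _ _
  have hΛpos : 0 < Λ := lt_of_lt_of_le hl hΛl
  have hAsum : 0 ≤ ∑ h ∈ J, A h := Finset.sum_nonneg fun h hh => (hA h hh).le
  have hgΛ : ∑ h ∈ J, min (M h) (A h / Λ) ≤ b := by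
    have h1 : ∑ h ∈ J, min (M h) (A h / Λ) ≤ ∑ h ∈ J, A h / Λ :=
      Finset.sum_le_sum fun h hh => min_le_right _ _
    have h2 : (∑ h ∈ J, A h) / Λ ≤ b := by
      rw [div_le_iff₀ hΛpos]
      have : (∑ h ∈ J, A h) / b ≤ Λ := le_max_right _ _
      calc ∑ h ∈ J, A h = ((∑ h ∈ J, A h) / b) * b := by field_simp
        _ ≤ Λ * b := by apply mul_le_mul_of_nonneg_right this hb.le
        _ = b * Λ := mul_comm _ _
    rw [Finset.sum_div] at h2
    linarith
  have hcont : ContinuousOn (fun l : ℝ => ∑ h ∈ J, min (M h) (A h / l)) (Set.Icc lam₀ Λ) := by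
    apply continuousOn_finset_sum
    intro h _
    have hdiv : ContinuousOn (fun l : ℝ => A h / l) (Set.Icc lam₀ Λ) := by
      apply ContinuousOn.div continuousOn_const continuousOn_id
      intro l hl'
      exact ne_of_gt (lt_of_lt_of_le hl hl'.1)
    exact (continuous_const.min continuous_id).comp_continuousOn hdiv
  have hmem : b ∈ Set.Icc (∑ h ∈ J, min (M h) (A h / Λ)) (∑ h ∈ J, min (M h) (A h / lam₀)) :=
    ⟨hgΛ, hub⟩
  have := intermediate_value_Icc' hΛl hcont hmem
  obtain ⟨lam, hlam, hval⟩ := this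
  exact ⟨lam, hlam.1, lt_of_lt_of_le hl hlam.1, hval⟩

def Concl {ι : Type*} [DecidableEq ι] (H : Finset ι) (A m M : ι → ℝ) (n : ℝ)
    (L₀ : Finset ι) : Prop :=
  ∃ (L U Lt : ℕ → Finset ι) (x : ℕ → ι → ℝ) (r : ℕ),
    1 ≤ r ∧ r ≤ (H \ L₀).card + 1 ∧
    L 1 = L₀ ∧
    (∀ i, 1 ≤ i → i ≤ r → L i ⊆ H) ∧
    (∀ i, 1 ≤ i → i ≤ r → L i ≠ H →
      0 < n - ∑ h ∈ L i, m h ∧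
      n - ∑ h ∈ L i, m h ≤ ∑ h ∈ H \ L i, M h ∧
      (∀ h ∈ H \ L i, 0 < x i h) ∧
      (∑ h ∈ H \ L i, x i h = n - ∑ h ∈ L i, m h) ∧
      (∀ h ∈ H \ L i, x i h ≤ M h) ∧
      (∀ y : ι → ℝ, (∀ h ∈ H \ L i, 0 < y h) →
        (∑ h ∈ H \ L i, y h = n - ∑ h ∈ L i, m h) → (∀ h ∈ H \ L i, y h ≤ M h) →
        ∑ h ∈ H \ L i, (A h) ^ 2 / x i h ≤ ∑ h ∈ H \ L i, (A h) ^ 2 / y h)) ∧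
    (∀ i, ∀ h, h ∈ U i ↔ h ∈ H \ L i ∧ x i h = M h) ∧
    (∀ i, ∀ h, h ∈ Lt i ↔ h ∈ H \ (L i ∪ U i) ∧ x i h ≤ m h) ∧
    (∀ i, 1 ≤ i → i < r → L (i + 1) = L i ∪ Lt i) ∧
    Lt r = ∅ ∧
    Feas1 H m M n (fun h => if h ∈ L r then m h else x r h) ∧
    (∀ y, Feas1 H m M n y →
      obj H A (fun h => if h ∈ L r then m h else x r h) ≤ obj H A y) ∧
    (∀ y, Feas1 H m M n y → (∀ z, Feas1 H m M n z → obj H A y ≤ obj H A z) →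
      ∀ h ∈ H, y h = if h ∈ L r then m h else x r h)

lemma concl_terminal {ι : Type*} [DecidableEq ι] (H : Finset ι) (A m M : ι → ℝ) (n : ℝ)
    (hm : ∀ h ∈ H, 0 < m h) (hmM : ∀ h ∈ H, m h < M h)
    (hn : n = ∑ h ∈ H, m h) : Concl H A m M n H := by
  classical
  have hxstar : ∀ h ∈ H, (if h ∈ H then m h else (0:ℝ)) = m h := fun h hh => if_pos hh
  have hfeas : Feas1 H m M n (fun h => if h ∈ H then m h else (0:ℝ)) := by
    refine ⟨fun h hh => by simp only [if_pos hh]; exact hm h hh, ?_, fun h hh => by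
      simp only [if_pos hh]; exact ⟨le_refl _, (hmM h hh).le⟩⟩
    rw [Finset.sum_congr rfl hxstar, hn]
  have hym : ∀ y, Feas1 H m M n y → ∀ h ∈ H, y h = m h := by
    intro y ⟨hy0, hysum, hyb⟩ h hh
    have hle : ∀ i ∈ H, m i ≤ y i := fun i hi => (hyb i hi).1
    have hsums : ∑ i ∈ H, m i = ∑ i ∈ H, y i := by rw [hysum, hn]
    exact ((Finset.sum_eq_sum_iff_of_le hle).mp hsums h hh).symm
  refine ⟨fun _ => H, fun _ => ∅, fun _ => ∅, fun _ _ => 0, 1, le_refl 1,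
    Nat.le_add_left 1 _, rfl, fun _ _ _ => Finset.Subset.refl H,
    fun i _ _ hne => absurd rfl hne, by simp, by simp, fun i h1 h2 => by omega,
    rfl, hfeas, ?_, ?_⟩
  · intro y hy
    have : obj H A (fun h => if h ∈ H then m h else (0:ℝ)) = obj H A y := by
      unfold obj
      refine Finset.sum_congr rfl fun h hh => by simp only [hxstar h hh, hym y hy h hh]
    exact this.le
  · intro y hy _ h hh
    rw [hym y hy h hh, hxstar h hh]
lemma main_rec {ι : Type*} [DecidableEq ι] (H : Finset ι) (A m M : ι → ℝ) (n : ℝ)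
    (hA : ∀ h ∈ H, 0 < A h) (hm : ∀ h ∈ H, 0 < m h) (hmM : ∀ h ∈ H, m h < M h)
    (hn₁ : ∑ h ∈ H, m h ≤ n) :
    ∀ k : ℕ, ∀ (L₀ : Finset ι) (lam₀ : ℝ), L₀ ⊆ H → (H \ L₀).card ≤ k → 0 < lam₀ →
      (∀ h ∈ L₀, A h ≤ lam₀ * m h) →
      (n - ∑ h ∈ L₀, m h ≤ ∑ h ∈ H \ L₀, min (M h) (A h / lam₀)) →
      Concl H A m M n L₀ := by
  classical
  intro k
  induction k with
  | zero =>
    intro L₀ lam₀ hsub hcard hl hL hbud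
    have hempty : H \ L₀ = ∅ := Finset.card_eq_zero.mp (Nat.le_zero.mp hcard)
    have hLH : L₀ = H := by
      apply Finset.Subset.antisymm hsub
      intro h hh
      by_contra hc
      have : h ∈ H \ L₀ := Finset.mem_sdiff.mpr ⟨hh, hc⟩
      rw [hempty] at this
      exact absurd this (Finset.notMem_empty h)
    rw [hempty, Finset.sum_empty] at hbud
    rw [hLH] at hbud ⊢
    exact concl_terminal H A m M n hm hmM (le_antisymm (by linarith) hn₁)
  | succ k ih =>
    intro L₀ lam₀ hsub hcard hl hL hbud
    by_cases hLH : L₀ = H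
    · rw [hLH, Finset.sdiff_self, Finset.sum_empty] at hbud
      rw [hLH]
      exact concl_terminal H A m M n hm hmM (le_antisymm (by linarith) hn₁)
    -- main case: L₀ ⊊ H
    set J := H \ L₀ with hJdef
    have hJH : ∀ h ∈ J, h ∈ H := fun h hh => (Finset.mem_sdiff.mp hh).1
    have hJne : J.Nonempty := by
      rw [hJdef, Finset.sdiff_nonempty]
      intro hc
      exact hLH (Finset.Subset.antisymm hsub hc)
    have hsplit : ∑ h ∈ J, m h + ∑ h ∈ L₀, m h = ∑ h ∈ H, m h := Finset.sum_sdiff hsub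
    have hmJ : 0 < ∑ h ∈ J, m h := Finset.sum_pos (fun h hh => hm h (hJH h hh)) hJne
    have hbpos : 0 < n - ∑ h ∈ L₀, m h := by linarith
    obtain ⟨lam, hll, hlpos, hsum⟩ :=
      exists_lam J A M _ lam₀ hl hbpos hbud (fun h hh => hA h (hJH h hh))
    set x₁ : ι → ℝ := fun h => min (M h) (A h / lam) with hx₁def
    have hMpos : ∀ h ∈ H, 0 < M h := fun h hh => lt_trans (hm h hh) (hmM h hh)
    have hx₁pos : ∀ h ∈ J, 0 < x₁ h := fun h hh =>
      lt_min (hMpos h (hJH h hh)) (div_pos (hA h (hJH h hh)) hlpos)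
    have hx₁le : ∀ h ∈ J, x₁ h ≤ M h := fun h _ => min_le_left _ _
    have hx₁alt : ∀ h, x₁ h ≠ M h → x₁ h = A h / lam := by
      intro h hne'
      rcases min_choice (M h) (A h / lam) with hc | hc
      · exact absurd hc hne'
      · exact hc
    have hbM : n - ∑ h ∈ L₀, m h ≤ ∑ h ∈ J, M h := by
      calc n - ∑ h ∈ L₀, m h ≤ ∑ h ∈ J, min (M h) (A h / lam₀) := hbud
        _ ≤ ∑ h ∈ J, M h := Finset.sum_le_sum fun h _ => min_le_left _ _
    -- KKT multiplier conditions for Problem 2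
    have hlag2 : ∀ (y : ι → ℝ), (∀ h ∈ J, y h ≤ M h) →
        ∀ h ∈ J, 0 ≤ ((A h) ^ 2 - lam ^ 2 * (x₁ h) ^ 2) * (x₁ h - y h) := by
      intro y hy h hh
      rcases le_total (M h) (A h / lam) with hc | hc
      · have hx : x₁ h = M h := min_eq_left hc
        have hA' : M h * lam ≤ A h := (le_div_iff₀ hlpos).mp hc
        apply mul_nonneg
        · rw [hx]
          have hnn : 0 ≤ M h * lam := (mul_pos (hMpos h (hJH h hh)) hlpos).le
          have hsq : (M h * lam) ^ 2 ≤ (A h) ^ 2 := pow_le_pow_left₀ hnn hA' 2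
          nlinarith [hsq]
        · rw [hx]
          linarith [hy h hh]
      · have hx : x₁ h = A h / lam := min_eq_right hc
        have hz : (A h) ^ 2 - lam ^ 2 * (x₁ h) ^ 2 = 0 := by
          rw [hx]
          field_simp
          ring
        rw [hz, zero_mul]
    have hopt2 : ∀ y : ι → ℝ, (∀ h ∈ J, 0 < y h) →
        (∑ h ∈ J, y h = n - ∑ h ∈ L₀, m h) → (∀ h ∈ J, y h ≤ M h) →
        ∑ h ∈ J, (A h) ^ 2 / x₁ h ≤ ∑ h ∈ J, (A h) ^ 2 / y h := by
      intro y hy0 hysum hyM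
      exact kkt_le J A x₁ y lam hx₁pos hy0 (by rw [hsum, hysum]) (hlag2 y hyM)
    set U₁ : Finset ι := J.filter (fun h => x₁ h = M h) with hU₁def
    set Lt₁ : Finset ι := (H \ (L₀ ∪ U₁)).filter (fun h => x₁ h ≤ m h) with hLt₁def
    have hLt₁sub : Lt₁ ⊆ J := by
      intro h hh
      rw [hLt₁def, Finset.mem_filter, Finset.mem_sdiff, Finset.mem_union] at hh
      exact Finset.mem_sdiff.mpr ⟨hh.1.1, fun hc => hh.1.2 (Or.inl hc)⟩
    have hLt₁m : ∀ h ∈ Lt₁, x₁ h ≤ m h := by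
      intro h hh
      rw [hLt₁def, Finset.mem_filter] at hh
      exact hh.2
    have hLt₁eq : ∀ h ∈ Lt₁, x₁ h = A h / lam := by
      intro h hh
      refine hx₁alt h fun hc => ?_
      rw [hLt₁def, Finset.mem_filter, Finset.mem_sdiff, Finset.mem_union] at hh
      exact hh.1.2 (Or.inr (Finset.mem_filter.mpr ⟨Finset.mem_sdiff.mpr ⟨hh.1.1, fun hc' => hh.1.2 (Or.inl hc')⟩, hc⟩))
    by_cases hT : Lt₁ = ∅
    · -- terminate with r = 1
      have hxstar_mem : ∀ h ∈ H, h ∉ L₀ → h ∈ J := fun h hh hn' => Finset.mem_sdiff.mpr ⟨hh, hn'⟩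
      have hstar_lb : ∀ h ∈ J, m h < x₁ h := by
        intro h hh
        by_cases hc : x₁ h = M h
        · rw [hc]; exact hmM h (hJH h hh)
        · by_contra hc2
          push_neg at hc2
          have hmem : h ∈ Lt₁ := by
            rw [hLt₁def, Finset.mem_filter, Finset.mem_sdiff, Finset.mem_union]
            refine ⟨⟨hJH h hh, fun hor => ?_⟩, hc2⟩
            rcases hor with h1 | h2
            · exact (Finset.mem_sdiff.mp hh).2 h1
            · rw [hU₁def, Finset.mem_filter] at h2
              exact hc h2.2
          rw [hT] at hmem
          exact absurd hmem (Finset.notMem_empty h)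
      have hstar_pos : ∀ h ∈ H, 0 < (if h ∈ L₀ then m h else x₁ h) := by
        intro h hh
        by_cases hc : h ∈ L₀
        · rw [if_pos hc]; exact hm h hh
        · rw [if_neg hc]; exact hx₁pos h (hxstar_mem h hh hc)
      have hstar_sum : ∑ h ∈ H, (if h ∈ L₀ then m h else x₁ h) = n := by
        rw [← Finset.sum_sdiff hsub]
        have e1 : ∑ h ∈ H \ L₀, (if h ∈ L₀ then m h else x₁ h) = ∑ h ∈ J, x₁ h :=
          Finset.sum_congr rfl fun h hh => if_neg (Finset.mem_sdiff.mp hh).2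
        have e2 : ∑ h ∈ L₀, (if h ∈ L₀ then m h else x₁ h) = ∑ h ∈ L₀, m h :=
          Finset.sum_congr rfl fun h hh => if_pos hh
        rw [e1, e2, hsum]
        ring
      have hstar_bd : ∀ h ∈ H, m h ≤ (if h ∈ L₀ then m h else x₁ h) ∧
          (if h ∈ L₀ then m h else x₁ h) ≤ M h := by
        intro h hh
        by_cases hc : h ∈ L₀
        · rw [if_pos hc]; exact ⟨le_refl _, (hmM h hh).le⟩
        · rw [if_neg hc]
          exact ⟨(hstar_lb h (hxstar_mem h hh hc)).le, hx₁le h (hxstar_mem h hh hc)⟩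
      have hfeas1 : Feas1 H m M n (fun h => if h ∈ L₀ then m h else x₁ h) :=
        ⟨hstar_pos, hstar_sum, hstar_bd⟩
      have hlag1 : ∀ y : ι → ℝ, Feas1 H m M n y → ∀ h ∈ H,
          0 ≤ ((A h) ^ 2 - lam ^ 2 * ((if h ∈ L₀ then m h else x₁ h)) ^ 2) *
            ((if h ∈ L₀ then m h else x₁ h) - y h) := by
        intro y hy h hh
        by_cases hc : h ∈ L₀
        · rw [if_pos hc]
          have h1 : A h ≤ lam * m h := by
            calc A h ≤ lam₀ * m h := hL h hc
              _ ≤ lam * m h := mul_le_mul_of_nonneg_right hll (hm h hh).le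
          have h2 : (A h) ^ 2 - lam ^ 2 * (m h) ^ 2 ≤ 0 := by
            nlinarith [(hA h hh).le, hm h hh]
          have h3 : m h - y h ≤ 0 := by linarith [(hy.2.2 h hh).1]
          nlinarith [mul_nonneg (neg_nonneg.mpr h2) (neg_nonneg.mpr h3)]
        · rw [if_neg hc]
          exact hlag2 y (fun h' hh' => (hy.2.2 h' (hJH h' hh')).2) h (hxstar_mem h hh hc)
      refine ⟨fun _ => L₀, fun _ => U₁, fun _ => Lt₁, fun _ => x₁, 1, le_refl 1,
        Nat.le_add_left 1 _, rfl, fun _ _ _ => hsub,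
        fun i _ _ _ => ⟨hbpos, hbM, hx₁pos, hsum, hx₁le, hopt2⟩, ?_, ?_,
        fun i h1 h2 => by omega, hT, hfeas1, ?_, ?_⟩
      · intro i h
        rw [hU₁def, Finset.mem_filter]
      · intro i h
        rw [hLt₁def, Finset.mem_filter]
      · intro y hy
        unfold obj
        exact kkt_le H A _ y lam hstar_pos hy.1 (by rw [hstar_sum, hy.2.1]) (hlag1 y hy)
      · intro y hy hyopt h hh
        have hobj : obj H A y ≤ obj H A (fun h => if h ∈ L₀ then m h else x₁ h) :=
          hyopt _ hfeas1
        unfold obj at hobj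
        exact kkt_eq H A _ y lam hstar_pos hy.1 (by rw [hstar_sum, hy.2.1]) (hlag1 y hy)
          (fun h' hh' => (hA h' hh').ne') hobj h hh
    · -- recurse
      set L₁ : Finset ι := L₀ ∪ Lt₁ with hL₁def
      have hL₁sub : L₁ ⊆ H := Finset.union_subset hsub (hLt₁sub.trans Finset.sdiff_subset)
      have hdisj : Disjoint L₀ Lt₁ := by
        rw [Finset.disjoint_left]
        intro a ha ha'
        rw [hLt₁def, Finset.mem_filter, Finset.mem_sdiff, Finset.mem_union] at ha'
        exact ha'.1.2 (Or.inl ha)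
      have hJ₁ : H \ L₁ = J \ Lt₁ := by
        rw [hL₁def, hJdef]
        ext a
        simp only [Finset.mem_sdiff, Finset.mem_union]
        tauto
      have hssub : H \ L₁ ⊂ J := by
        rw [hJ₁]
        obtain ⟨a, ha⟩ := Finset.nonempty_iff_ne_empty.mpr hT
        refine (Finset.ssubset_iff_of_subset Finset.sdiff_subset).mpr
          ⟨a, hLt₁sub ha, by simp [Finset.mem_sdiff, ha]⟩
      have hcardlt : (H \ L₁).card < J.card := Finset.card_lt_card hssub
      have hcard' : (H \ L₁).card ≤ k := by omega
      have hinv : ∀ h ∈ L₁, A h ≤ lam * m h := by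
        intro h hh
        rw [hL₁def, Finset.mem_union] at hh
        rcases hh with hh | hh
        · calc A h ≤ lam₀ * m h := hL h hh
            _ ≤ lam * m h := mul_le_mul_of_nonneg_right hll (hm h (hsub hh)).le
        · have h1 := hLt₁eq h hh
          have h2 := hLt₁m h hh
          rw [h1] at h2
          have := (div_le_iff₀ hlpos).mp h2
          linarith [this]
      have hLt₁sum : ∑ h ∈ Lt₁, x₁ h ≤ ∑ h ∈ Lt₁, m h := Finset.sum_le_sum hLt₁m
      have hsum_split : ∑ h ∈ J \ Lt₁, x₁ h + ∑ h ∈ Lt₁, x₁ h = ∑ h ∈ J, x₁ h :=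
        Finset.sum_sdiff hLt₁sub
      have hmsum : ∑ h ∈ L₁, m h = ∑ h ∈ L₀, m h + ∑ h ∈ Lt₁, m h := by
        rw [hL₁def, Finset.sum_union hdisj]
      have hbud' : n - ∑ h ∈ L₁, m h ≤ ∑ h ∈ H \ L₁, min (M h) (A h / lam) := by
        have he : ∑ h ∈ H \ L₁, min (M h) (A h / lam) = ∑ h ∈ J \ Lt₁, x₁ h := by
          rw [hJ₁]
        rw [he, hmsum]
        linarith [hsum]
      obtain ⟨L', U', Lt', x', r', hr'1, hr'card, hL'1, hsubs', hfeas', hUiff', hLtiff',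
        hrec', hterm', hfeas1', hopt', huniq'⟩ := ih L₁ lam hL₁sub hcard' hlpos hinv hbud'
      set LL : ℕ → Finset ι := fun i => if i ≤ 1 then L₀ else L' (i - 1) with hLLdef
      set xx : ℕ → ι → ℝ := fun i => if i ≤ 1 then x₁ else x' (i - 1) with hxxdef
      set UU : ℕ → Finset ι := fun i => (H \ LL i).filter (fun h => xx i h = M h) with hUUdef
      set LtLt : ℕ → Finset ι :=
        fun i => (H \ (LL i ∪ UU i)).filter (fun h => xx i h ≤ m h) with hLtLtdef
      have hLL1 : LL 1 = L₀ := by simp [hLLdef]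
      have hLLge : ∀ i, 2 ≤ i → LL i = L' (i - 1) := by
        intro i hi
        rw [hLLdef]
        simp only [if_neg (by omega : ¬ i ≤ 1)]
      have hxx1 : xx 1 = x₁ := by simp [hxxdef]
      have hxxge : ∀ i, 2 ≤ i → xx i = x' (i - 1) := by
        intro i hi
        rw [hxxdef]
        simp only [if_neg (by omega : ¬ i ≤ 1)]
      have hUUiff : ∀ i h, h ∈ UU i ↔ h ∈ H \ LL i ∧ xx i h = M h := by
        intro i h
        rw [hUUdef]
        exact Finset.mem_filter
      have hLtiff2 : ∀ i h, h ∈ LtLt i ↔ h ∈ H \ (LL i ∪ UU i) ∧ xx i h ≤ m h := by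
        intro i h
        rw [hLtLtdef]
        exact Finset.mem_filter
      have hUUeq : ∀ i, 2 ≤ i → UU i = U' (i - 1) := by
        intro i hi
        ext h
        rw [hUUiff i h, hUiff' (i - 1) h, hLLge i hi, hxxge i hi]
      have hLtLteq : ∀ i, 2 ≤ i → LtLt i = Lt' (i - 1) := by
        intro i hi
        ext h
        rw [hLtiff2 i h, hLtiff' (i - 1) h, hLLge i hi, hxxge i hi, hUUeq i hi]
      have hUU1 : UU 1 = U₁ := by
        ext h
        rw [hUUiff 1 h, hLL1, hxx1, hU₁def, Finset.mem_filter]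
      have hLt1 : LtLt 1 = Lt₁ := by
        ext h
        rw [hLtiff2 1 h, hLL1, hxx1, hUU1, hLt₁def, Finset.mem_filter]
      have hLLr : LL (r' + 1) = L' r' := by
        rw [hLLge (r' + 1) (by omega), Nat.add_sub_cancel]
      have hxxr : xx (r' + 1) = x' r' := by
        rw [hxxge (r' + 1) (by omega), Nat.add_sub_cancel]
      refine ⟨LL, UU, LtLt, xx, r' + 1, by omega,
        by have hJc : #(H \ L₀) = #J := rfl; omega, hLL1, ?_, ?_, hUUiff, hLtiff2,
        ?_, ?_, ?_, ?_, ?_⟩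
      · intro i h1 h2
        rcases Nat.lt_or_ge i 2 with hi | hi
        · have hieq : i = 1 := by omega
          rw [hieq, hLL1]
          exact hsub
        · rw [hLLge i hi]
          exact hsubs' (i - 1) (by omega) (by omega)
      · intro i h1 h2 hne
        rcases Nat.lt_or_ge i 2 with hi | hi
        · have hieq : i = 1 := by omega
          rw [hieq, hLL1, hxx1]
          exact ⟨hbpos, hbM, hx₁pos, hsum, hx₁le, hopt2⟩
        · rw [hLLge i hi] at hne ⊢
          rw [hxxge i hi]
          exact hfeas' (i - 1) (by omega) (by omega) hne
      · intro i h1 h2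
        rcases Nat.lt_or_ge i 2 with hi | hi
        · have hieq : i = 1 := by omega
          subst hieq
          rw [hLt1, hLL1, hLLge 2 (le_refl 2)]
          norm_num
          rw [hL'1]
        · rw [hLLge (i + 1) (by omega), hLLge i hi, hLtLteq i hi,
            (by omega : (i + 1) - 1 = (i - 1) + 1)]
          exact hrec' (i - 1) (by omega) (by omega)
      · rw [hLtLteq (r' + 1) (by omega), Nat.add_sub_cancel, hterm']
      · simp only [hLLr, hxxr]
        exact hfeas1'
      · intro y hy
        simp only [hLLr, hxxr]
        exact hopt' y hy
      · intro y hy hyopt h hh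
        rw [hLLr, hxxr]
        exact huniq' y hy hyopt h hh

/-- Correctness of the RNABOX algorithm: the recursion
`L 1 = ∅`, `L (r+1) = L r ∪ L̃ r` (with `x r` the unique optimal solution of the interim
one-sided Problem 2 on `H \ L r` with budget `n − ∑_{L r} m`,
`U r = {h ∈ H \ L r : x r h = M h}` and `L̃ r = {h ∈ H \ (L r ∪ U r) : x r h ≤ m h}`)
is well defined (each interim Problem 2 with `L r ⊊ H` is feasible), terminates at some
`r* ≤ |H| + 1` with `L̃ r* = ∅`, and the assembled vector (`m` on `L r*`, `x r*` elsewhere)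
is the unique optimal solution of Problem 1. -/
theorem rnabox_correct {ι : Type*} [DecidableEq ι] (H : Finset ι) (hH : H.Nonempty)
    (A m M : ι → ℝ) (n : ℝ)
    (hA : ∀ h ∈ H, 0 < A h) (hm : ∀ h ∈ H, 0 < m h) (hmM : ∀ h ∈ H, m h < M h)
    (hn₁ : ∑ h ∈ H, m h ≤ n) (hn₂ : n ≤ ∑ h ∈ H, M h) :
    ∃ (L U Lt : ℕ → Finset ι) (x : ℕ → ι → ℝ) (r : ℕ),
      1 ≤ r ∧ r ≤ H.card + 1 ∧
      L 1 = ∅ ∧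
      (∀ i, 1 ≤ i → i ≤ r → L i ⊆ H) ∧
      -- each interim Problem 2 is feasible and `x i` is its optimal solution:
      (∀ i, 1 ≤ i → i ≤ r → L i ≠ H →
        0 < n - ∑ h ∈ L i, m h ∧
        n - ∑ h ∈ L i, m h ≤ ∑ h ∈ H \ L i, M h ∧
        (∀ h ∈ H \ L i, 0 < x i h) ∧
        (∑ h ∈ H \ L i, x i h = n - ∑ h ∈ L i, m h) ∧
        (∀ h ∈ H \ L i, x i h ≤ M h) ∧
        (∀ y : ι → ℝ, (∀ h ∈ H \ L i, 0 < y h) →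
          (∑ h ∈ H \ L i, y h = n - ∑ h ∈ L i, m h) → (∀ h ∈ H \ L i, y h ≤ M h) →
          ∑ h ∈ H \ L i, (A h) ^ 2 / x i h ≤ ∑ h ∈ H \ L i, (A h) ^ 2 / y h)) ∧
      -- the take-max and take-min candidate sets:
      (∀ i, ∀ h, h ∈ U i ↔ h ∈ H \ L i ∧ x i h = M h) ∧
      (∀ i, ∀ h, h ∈ Lt i ↔ h ∈ H \ (L i ∪ U i) ∧ x i h ≤ m h) ∧
      -- the recursion:
      (∀ i, 1 ≤ i → i < r → L (i + 1) = L i ∪ Lt i) ∧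
      -- termination:
      Lt r = ∅ ∧
      -- the assembled allocation solves Problem 1 and is its unique optimal solution:
      Feas1 H m M n (fun h => if h ∈ L r then m h else x r h) ∧
      (∀ y, Feas1 H m M n y →
        obj H A (fun h => if h ∈ L r then m h else x r h) ≤ obj H A y) ∧
      (∀ y, Feas1 H m M n y → (∀ z, Feas1 H m M n z → obj H A y ≤ obj H A z) →
        ∀ h ∈ H, y h = if h ∈ L r then m h else x r h) := by
  classical
  set lam₀ := H.inf' hH (fun h => A h / M h) with hl₀
  have hMpos : ∀ h ∈ H, 0 < M h := fun h hh => lt_trans (hm h hh) (hmM h hh)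
  have hlpos : 0 < lam₀ := by
    rw [hl₀, Finset.lt_inf'_iff]
    exact fun h hh => div_pos (hA h hh) (hMpos h hh)
  have hbud : n - ∑ h ∈ (∅ : Finset ι), m h ≤ ∑ h ∈ H \ ∅, min (M h) (A h / lam₀) := by
    rw [Finset.sum_empty, Finset.sdiff_empty, sub_zero]
    have hmin : ∀ h ∈ H, min (M h) (A h / lam₀) = M h := by
      intro h hh
      apply min_eq_left
      rw [le_div_iff₀ hlpos]
      calc M h * lam₀ ≤ M h * (A h / M h) := by
            apply mul_le_mul_of_nonneg_left (Finset.inf'_le _ hh) (hMpos h hh).le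
        _ = A h := by rw [mul_comm, div_mul_cancel₀ (A h) (ne_of_gt (hMpos h hh))]
    rw [Finset.sum_congr rfl hmin]
    exact hn₂
  obtain ⟨L, U, Lt, x, r, h1, h2, h3, h4, h5, h6, h7, h8, h9, h10, h11, h12⟩ :=
    main_rec H A m M n hA hm hmM hn₁ H.card ∅ lam₀ (Finset.empty_subset H)
      (by rw [Finset.sdiff_empty]) hlpos (by simp) hbud
  refine ⟨L, U, Lt, x, r, h1, ?_, h3, h4, h5, h6, h7, h8, h9, h10, h11, h12⟩
  rwa [Finset.sdiff_empty] at h2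
end
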